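/- arXiv:2006.15859 — 4 statements merged into one kernel-verified Lean document; each statement's English description precedes it below -/
import Mathlib

section
/- Let S(x,y,z) be the space of formal series f ∈ T(x,y,z) annihilated by the four operators D₀ = x∂_x + y∂_y + z∂_z, D̄₀ = x̄∂_{x̄} + ȳ∂_{ȳ} + z̄∂_{z̄}, D₁ = x²∂_x + y²∂_y + z²∂_z, D̄₁ = x̄²∂_{x̄} + ȳ²∂_{ȳ} + z̄²∂_{z̄}. Then every f ∈ S(x,y,z) can be written f = Σ_{n,r∈ℤ_{≥0}} Σ_{m,s∈ℝ} a_{n,m,r,s}(y/x)ⁿ(z/y)^m(ȳ/x̄)^r(z̄/ȳ)^s, and the evaluation map v : S(x,y,z) → ℂ((p,p̄,|p|^ℝ)) sending f to Σ_{m,s} a_{0,m,0,s} p^m p̄^s (the formal limit (x,y,z) → (∞,1,p)) is a linear isomorphism, with inverse the substitution of the expansion of the cross-ratio. -/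
noncomputable section

/-!  **Statement 10.**  Formal series in `x, x̄, y, ȳ, z, z̄` (with real exponents) are
encoded by coefficient functions `a : ℝ⁶ → ℂ`, where `a ex exb ey eyb ez ezb` is the
coefficient of `x^ex x̄^exb y^ey ȳ^eyb z^ez z̄^ezb`. -/

/-- Membership in `T(x,y,z) =
`ℂ[[y/x, ȳ/x̄]]((z/y, z̄/ȳ, |z/y|^ℝ))[x^±, y^±, x̄^±, ȳ^±, |x|^ℝ, |y|^ℝ]`:
finitely many monomial offsets in `x, x̄, y, ȳ`, a power series in `y/x, ȳ/x̄`, and a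
`z/y, z̄/ȳ`-series with exponents bounded below, integral holomorphic/antiholomorphic
difference, and countable support. -/
def MemT3 (a : ℝ → ℝ → ℝ → ℝ → ℝ → ℝ → ℂ) : Prop :=
  (∃ T : Finset (ℝ × ℝ × ℝ × ℝ), ∀ ex exb ey eyb ez ezb : ℝ,
    a ex exb ey eyb ez ezb ≠ 0 →
      ∃ σ ∈ T, ∃ k l : ℕ, ex = σ.1 - k ∧ exb = σ.2.1 - l ∧
        ey = σ.2.2.1 + k - ez ∧ eyb = σ.2.2.2 + l - ezb) ∧
  (∃ N : ℝ, ∀ ex exb ey eyb ez ezb : ℝ, a ex exb ey eyb ez ezb ≠ 0 →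
    N ≤ ez ∧ N ≤ ezb) ∧
  (∀ ex exb ey eyb ez ezb : ℝ, a ex exb ey eyb ez ezb ≠ 0 →
    ∃ m : ℤ, ez - ezb = (m : ℝ)) ∧
  Set.Countable {e : (ℝ × ℝ) × (ℝ × ℝ) × ℝ × ℝ |
    a e.1.1 e.1.2 e.2.1.1 e.2.1.2 e.2.2.1 e.2.2.2 ≠ 0}

/-- Membership in `S(x,y,z)`: an element of `T(x,y,z)` annihilated by
`D₀ = x∂_x + y∂_y + z∂_z`, `D̄₀`, `D₁ = x²∂_x + y²∂_y + z²∂_z` and `D̄₁`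
(expressed on coefficients). -/
def MemS3 (a : ℝ → ℝ → ℝ → ℝ → ℝ → ℝ → ℂ) : Prop :=
  MemT3 a ∧
  (∀ ex exb ey eyb ez ezb : ℝ,
    ((ex + ey + ez : ℝ) : ℂ) * a ex exb ey eyb ez ezb = 0) ∧
  (∀ ex exb ey eyb ez ezb : ℝ,
    ((exb + eyb + ezb : ℝ) : ℂ) * a ex exb ey eyb ez ezb = 0) ∧
  (∀ ex exb ey eyb ez ezb : ℝ,
    ((ex - 1 : ℝ) : ℂ) * a (ex - 1) exb ey eyb ez ezb +
      ((ey - 1 : ℝ) : ℂ) * a ex exb (ey - 1) eyb ez ezb +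
      ((ez - 1 : ℝ) : ℂ) * a ex exb ey eyb (ez - 1) ezb = 0) ∧
  (∀ ex exb ey eyb ez ezb : ℝ,
    ((exb - 1 : ℝ) : ℂ) * a ex (exb - 1) ey eyb ez ezb +
      ((eyb - 1 : ℝ) : ℂ) * a ex exb ey (eyb - 1) ez ezb +
      ((ezb - 1 : ℝ) : ℂ) * a ex exb ey eyb ez (ezb - 1) = 0)

/-- Membership in `ℂ((p, p̄, |p|^ℝ))`. -/
def MemC (c : ℝ → ℝ → ℂ) : Prop :=
  (∀ r s : ℝ, c r s ≠ 0 → ∃ m : ℤ, r - s = (m : ℝ)) ∧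
  Set.Countable {p : ℝ × ℝ | c p.1 p.2 ≠ 0} ∧
  ∃ N : ℝ, ∀ r s : ℝ, c r s ≠ 0 → N ≤ r ∧ N ≤ s

/-- The evaluation map `v : S(x,y,z) → ℂ((p,p̄,|p|^ℝ))`: the formal limit
`(x,y,z) → (∞,1,p)`, i.e. the `(y/x)⁰(ȳ/x̄)⁰` part, read off in the variables
`p = z/y`, `p̄ = z̄/ȳ`. -/
def evalS3 (a : ℝ → ℝ → ℝ → ℝ → ℝ → ℝ → ℂ) : ℝ → ℝ → ℂ :=
  fun m s => a 0 0 (-m) (-s) m s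

/-! ### Auxiliary machinery -/

/-- Coefficients at level `(n, r)` obtained from `c` by the `D₁`/`D̄₁` recursions. -/
def Arec (c : ℝ → ℝ → ℂ) : ℕ → ℕ → ℝ → ℝ → ℂ
  | 0, 0, ez, ezb => c ez ezb
  | 0, (r+1), ez, ezb =>
      (((r : ℝ) - ezb : ℝ) * Arec c 0 r ez ezb
        + ((ezb - 1 : ℝ) : ℂ) * Arec c 0 r ez (ezb - 1)) / ((r : ℂ) + 1)
  | (n+1), r, ez, ezb =>
      (((n : ℝ) - ez : ℝ) * Arec c (n) r ez ezb
        + ((ez - 1 : ℝ) : ℂ) * Arec c n r (ez - 1) ezb) / ((n : ℂ) + 1)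

lemma natC_ne (n : ℕ) : ((n : ℂ) + 1) ≠ 0 := by
  have : ((n:ℝ) + 1) ≠ 0 := by positivity
  exact_mod_cast this

lemma Arec_rec (c : ℝ → ℝ → ℂ) (n r : ℕ) (ez ezb : ℝ) :
    ((n : ℂ) + 1) * Arec c (n+1) r ez ezb =
      (((n : ℝ) - ez : ℝ) : ℂ) * Arec c n r ez ezb
        + ((ez - 1 : ℝ) : ℂ) * Arec c n r (ez - 1) ezb := by
  rw [Arec]
  exact mul_div_cancel₀ _ (natC_ne n)

lemma Arec_bar (c : ℝ → ℝ → ℂ) : ∀ n r : ℕ, ∀ ez ezb : ℝ,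
    ((r : ℂ) + 1) * Arec c n (r+1) ez ezb =
      (((r : ℝ) - ezb : ℝ) : ℂ) * Arec c n r ez ezb
        + ((ezb - 1 : ℝ) : ℂ) * Arec c n r ez (ezb - 1) := by
  intro n
  induction n with
  | zero =>
      intro r ez ezb
      rw [Arec]
      exact mul_div_cancel₀ _ (natC_ne r)
  | succ n ih =>
      intro r ez ezb
      have h := natC_ne n
      rw [Arec, Arec, Arec]
      push_cast at ih ⊢
      field_simp
      linear_combination ((n:ℂ) - ez) * ih r ez ezb + ((ez:ℂ) - 1) * ih r (ez-1) ezb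

/-- If `Arec` is nonzero then some shifted coefficient of `c` is nonzero. -/
lemma Arec_supp (c : ℝ → ℝ → ℂ) : ∀ n r : ℕ, ∀ ez ezb : ℝ,
    Arec c n r ez ezb ≠ 0 →
      ∃ j l : ℕ, j ≤ n ∧ l ≤ r ∧ c (ez - j) (ezb - l) ≠ 0 := by
  have key : ∀ (u v : ℂ) (x y : ℂ) (w : ℂ), (u * x + v * y) / w ≠ 0 → x ≠ 0 ∨ y ≠ 0 := by
    intro u v x y w h
    by_contra hc
    push_neg at hc
    exact h (by rw [hc.1, hc.2, mul_zero, mul_zero, add_zero, zero_div])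
  intro n
  induction n with
  | zero =>
      intro r
      induction r with
      | zero =>
          intro ez ezb h
          exact ⟨0, 0, le_rfl, le_rfl, by simpa [Arec] using h⟩
      | succ r ih =>
          intro ez ezb h
          rw [Arec] at h
          rcases key _ _ _ _ _ h with h' | h'
          · obtain ⟨j, l, hj, hl, hc⟩ := ih ez ezb h'
            exact ⟨j, l, hj, hl.trans (Nat.le_succ r), hc⟩
          · obtain ⟨j, l, hj, hl, hc⟩ := ih ez (ezb - 1) h'
            refine ⟨j, l + 1, hj, Nat.succ_le_succ hl, ?_⟩
            have : ezb - 1 - l = ezb - ((l + 1 : ℕ) : ℝ) := by push_cast; ring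
            rwa [this] at hc
  | succ n ih =>
      intro r ez ezb h
      rw [Arec] at h
      rcases key _ _ _ _ _ h with h' | h'
      · obtain ⟨j, l, hj, hl, hc⟩ := ih r ez ezb h'
        exact ⟨j, l, hj.trans (Nat.le_succ n), hl, hc⟩
      · obtain ⟨j, l, hj, hl, hc⟩ := ih r (ez - 1) ezb h'
        refine ⟨j + 1, l, Nat.succ_le_succ hj, hl, ?_⟩
        have : ez - 1 - j = ez - ((j + 1 : ℕ) : ℝ) := by push_cast; ring
        rwa [this] at hc

/-- The structured support condition for elements of `S(x,y,z)`. -/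
def Struct (ex exb ey eyb ez ezb : ℝ) : Prop :=
  ∃ n r : ℕ, ex = -(n : ℝ) ∧ exb = -(r : ℝ) ∧ ey = (n : ℝ) - ez ∧ eyb = (r : ℝ) - ezb

/-- Index extraction. -/
def nIdx (t : ℝ) : ℕ := (⌊-t⌋).toNat

lemma nIdx_neg (n : ℕ) : nIdx (-(n : ℝ)) = n := by
  simp [nIdx]

open Classical in
/-- The inverse of the evaluation map: substitution of the cross-ratio expansion. -/
def aOf (c : ℝ → ℝ → ℂ) (ex exb ey eyb ez ezb : ℝ) : ℂ :=
  if Struct ex exb ey eyb ez ezb then Arec c (nIdx ex) (nIdx exb) ez ezb else 0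

lemma aOf_struct (c : ℝ → ℝ → ℂ) {ex exb ey eyb ez ezb : ℝ} {n r : ℕ}
    (h1 : ex = -(n : ℝ)) (h2 : exb = -(r : ℝ)) (h3 : ey = (n : ℝ) - ez)
    (h4 : eyb = (r : ℝ) - ezb) :
    aOf c ex exb ey eyb ez ezb = Arec c n r ez ezb := by
  rw [aOf, if_pos ⟨n, r, h1, h2, h3, h4⟩, h1, h2, nIdx_neg, nIdx_neg]

lemma aOf_nstruct (c : ℝ → ℝ → ℂ) {ex exb ey eyb ez ezb : ℝ}
    (h : ¬ Struct ex exb ey eyb ez ezb) :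
    aOf c ex exb ey eyb ez ezb = 0 := by
  rw [aOf, if_neg h]

lemma aOf_ne {c : ℝ → ℝ → ℂ} {ex exb ey eyb ez ezb : ℝ}
    (h : aOf c ex exb ey eyb ez ezb ≠ 0) :
    ∃ n r : ℕ, ex = -(n : ℝ) ∧ exb = -(r : ℝ) ∧ ey = (n : ℝ) - ez ∧
      eyb = (r : ℝ) - ezb ∧ Arec c n r ez ezb ≠ 0 := by
  by_cases hs : Struct ex exb ey eyb ez ezb
  · obtain ⟨n, r, h1, h2, h3, h4⟩ := hs
    exact ⟨n, r, h1, h2, h3, h4, by rw [← aOf_struct c h1 h2 h3 h4]; exact h⟩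
  · exact absurd (aOf_nstruct c hs) h

/-- The `D₁` equation for `aOf c`. -/
lemma aOf_eq1 (c : ℝ → ℝ → ℂ) (ex exb ey eyb ez ezb : ℝ) :
    ((ex - 1 : ℝ) : ℂ) * aOf c (ex - 1) exb ey eyb ez ezb +
      ((ey - 1 : ℝ) : ℂ) * aOf c ex exb (ey - 1) eyb ez ezb +
      ((ez - 1 : ℝ) : ℂ) * aOf c ex exb ey eyb (ez - 1) ezb = 0 := by
  by_cases hm : ∃ n r : ℕ, ex = -(n : ℝ) ∧ exb = -(r : ℝ) ∧
      ey = (n : ℝ) + 1 - ez ∧ eyb = (r : ℝ) - ezb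
  · obtain ⟨n, r, h1, h2, h3, h4⟩ := hm
    have e1 : aOf c (ex - 1) exb ey eyb ez ezb = Arec c (n+1) r ez ezb :=
      aOf_struct c (by push_cast; linarith) h2 (by push_cast; linarith) h4
    have e2 : aOf c ex exb (ey - 1) eyb ez ezb = Arec c n r ez ezb :=
      aOf_struct c h1 h2 (by linarith) h4
    have e3 : aOf c ex exb ey eyb (ez - 1) ezb = Arec c n r (ez - 1) ezb :=
      aOf_struct c h1 h2 (by linarith) h4
    rw [e1, e2, e3]
    have key := Arec_rec c n r ez ezb
    subst h1 h3
    push_cast at key ⊢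
    linear_combination -key
  · have t2 : aOf c ex exb (ey - 1) eyb ez ezb = 0 := by
      refine aOf_nstruct c ?_
      rintro ⟨n, r, h1, h2, h3, h4⟩
      exact hm ⟨n, r, h1, h2, by linarith, h4⟩
    have t3 : aOf c ex exb ey eyb (ez - 1) ezb = 0 := by
      refine aOf_nstruct c ?_
      rintro ⟨n, r, h1, h2, h3, h4⟩
      exact hm ⟨n, r, h1, h2, by linarith, h4⟩
    rw [t2, t3, mul_zero, mul_zero, add_zero, add_zero]
    by_cases st1 : Struct (ex - 1) exb ey eyb ez ezb
    · obtain ⟨n₁, r, h1, h2, h3, h4⟩ := st1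
      cases n₁ with
      | zero =>
          have : ex - 1 = 0 := by simpa using h1
          rw [this]
          simp
      | succ n =>
          exfalso
          refine hm ⟨n, r, ?_, h2, ?_, h4⟩ <;> push_cast at h1 h3 ⊢ <;> linarith
    · rw [aOf_nstruct c st1, mul_zero]

/-- The `D̄₁` equation for `aOf c`. -/
lemma aOf_eq2 (c : ℝ → ℝ → ℂ) (ex exb ey eyb ez ezb : ℝ) :
    ((exb - 1 : ℝ) : ℂ) * aOf c ex (exb - 1) ey eyb ez ezb +
      ((eyb - 1 : ℝ) : ℂ) * aOf c ex exb ey (eyb - 1) ez ezb +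
      ((ezb - 1 : ℝ) : ℂ) * aOf c ex exb ey eyb ez (ezb - 1) = 0 := by
  by_cases hm : ∃ n r : ℕ, ex = -(n : ℝ) ∧ exb = -(r : ℝ) ∧
      ey = (n : ℝ) - ez ∧ eyb = (r : ℝ) + 1 - ezb
  · obtain ⟨n, r, h1, h2, h3, h4⟩ := hm
    have e1 : aOf c ex (exb - 1) ey eyb ez ezb = Arec c n (r+1) ez ezb :=
      aOf_struct c h1 (by push_cast; linarith) h3 (by push_cast; linarith)
    have e2 : aOf c ex exb ey (eyb - 1) ez ezb = Arec c n r ez ezb :=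
      aOf_struct c h1 h2 h3 (by linarith)
    have e3 : aOf c ex exb ey eyb ez (ezb - 1) = Arec c n r ez (ezb - 1) :=
      aOf_struct c h1 h2 h3 (by linarith)
    rw [e1, e2, e3]
    have key := Arec_bar c n r ez ezb
    subst h2 h4
    push_cast at key ⊢
    linear_combination -key
  · have t2 : aOf c ex exb ey (eyb - 1) ez ezb = 0 := by
      refine aOf_nstruct c ?_
      rintro ⟨n, r, h1, h2, h3, h4⟩
      exact hm ⟨n, r, h1, h2, h3, by linarith⟩
    have t3 : aOf c ex exb ey eyb ez (ezb - 1) = 0 := by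
      refine aOf_nstruct c ?_
      rintro ⟨n, r, h1, h2, h3, h4⟩
      exact hm ⟨n, r, h1, h2, h3, by linarith⟩
    rw [t2, t3, mul_zero, mul_zero, add_zero, add_zero]
    by_cases st1 : Struct ex (exb - 1) ey eyb ez ezb
    · obtain ⟨n, r₁, h1, h2, h3, h4⟩ := st1
      cases r₁ with
      | zero =>
          have : exb - 1 = 0 := by simpa using h2
          rw [this]
          simp
      | succ r =>
          exfalso
          refine hm ⟨n, r, h1, ?_, h3, ?_⟩ <;> push_cast at h2 h4 ⊢ <;> linarith
    · rw [aOf_nstruct c st1, mul_zero]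

/-- Structure of the support of an element of `S(x,y,z)`. -/
lemma supp_struct {a : ℝ → ℝ → ℝ → ℝ → ℝ → ℝ → ℂ} (ha : MemS3 a) :
    ∀ ex exb ey eyb ez ezb : ℝ, a ex exb ey eyb ez ezb ≠ 0 →
      ∃ n r : ℕ, ex = -(n : ℝ) ∧ exb = -(r : ℝ) ∧
        ey = (n : ℝ) - ez ∧ eyb = (r : ℝ) - ezb := by
  obtain ⟨⟨⟨T, hT⟩, -, -, -⟩, h0, h0b, h1, h1b⟩ := ha
  obtain ⟨M, hM⟩ := Finset.exists_le (T.image (fun σ => max σ.1 σ.2.1))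
  have bound : ∀ ex exb ey eyb ez ezb : ℝ, a ex exb ey eyb ez ezb ≠ 0 →
      ex ≤ M ∧ exb ≤ M := by
    intro ex exb ey eyb ez ezb h
    obtain ⟨σ, hσ, k, l, hex, hexb, -, -⟩ := hT ex exb ey eyb ez ezb h
    have hMσ := hM _ (Finset.mem_image_of_mem _ hσ)
    constructor
    · have h1 : σ.1 ≤ M := le_trans (le_max_left _ _) hMσ
      have hk : (0:ℝ) ≤ k := Nat.cast_nonneg k
      rw [hex]; linarith
    · have h1 : σ.2.1 ≤ M := le_trans (le_max_right _ _) hMσ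
      have hl : (0:ℝ) ≤ l := Nat.cast_nonneg l
      rw [hexb]; linarith
  have upx : ∀ ex exb ey eyb ez ezb : ℝ, a ex exb ey eyb ez ezb ≠ 0 → ex ≠ 0 →
      a (ex+1) exb (ey-1) eyb ez ezb ≠ 0 ∨ a (ex+1) exb ey eyb (ez-1) ezb ≠ 0 := by
    intro ex exb ey eyb ez ezb h hx
    by_contra hc
    push_neg at hc
    have heq := h1 (ex+1) exb ey eyb ez ezb
    rw [show ex + 1 - 1 = ex by ring] at heq
    rw [hc.1, hc.2, mul_zero, mul_zero, add_zero, add_zero] at heq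
    rcases mul_eq_zero.1 heq with h' | h'
    · exact hx (by exact_mod_cast h')
    · exact h h'
  have upxb : ∀ ex exb ey eyb ez ezb : ℝ, a ex exb ey eyb ez ezb ≠ 0 → exb ≠ 0 →
      a ex (exb+1) ey (eyb-1) ez ezb ≠ 0 ∨ a ex (exb+1) ey eyb ez (ezb-1) ≠ 0 := by
    intro ex exb ey eyb ez ezb h hx
    by_contra hc
    push_neg at hc
    have heq := h1b ex (exb+1) ey eyb ez ezb
    rw [show exb + 1 - 1 = exb by ring] at heq
    rw [hc.1, hc.2, mul_zero, mul_zero, add_zero, add_zero] at heq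
    rcases mul_eq_zero.1 heq with h' | h'
    · exact hx (by exact_mod_cast h')
    · exact h h'
  have keyx : ∀ d : ℕ, ∀ ex exb ey eyb ez ezb : ℝ, a ex exb ey eyb ez ezb ≠ 0 →
      M - ex ≤ d → ∃ n : ℕ, ex = -(n:ℝ) := by
    intro d
    induction d with
    | zero =>
        intro ex exb ey eyb ez ezb h hd
        by_cases hx : ex = 0
        · exact ⟨0, by simp [hx]⟩
        · exfalso
          rcases upx ex exb ey eyb ez ezb h hx with h' | h' <;>
          · have := (bound _ _ _ _ _ _ h').1
            simp only [Nat.cast_zero] at hd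
            linarith
    | succ d ih =>
        intro ex exb ey eyb ez ezb h hd
        by_cases hx : ex = 0
        · exact ⟨0, by simp [hx]⟩
        · have hd' : M - (ex + 1) ≤ d := by push_cast at hd ⊢; linarith
          have step : ∃ n : ℕ, ex + 1 = -(n:ℝ) := by
            rcases upx ex exb ey eyb ez ezb h hx with h' | h'
            · exact ih _ _ _ _ _ _ h' hd'
            · exact ih _ _ _ _ _ _ h' hd'
          obtain ⟨n, hn⟩ := step
          exact ⟨n + 1, by push_cast; linarith⟩
  have keyxb : ∀ d : ℕ, ∀ ex exb ey eyb ez ezb : ℝ, a ex exb ey eyb ez ezb ≠ 0 →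
      M - exb ≤ d → ∃ r : ℕ, exb = -(r:ℝ) := by
    intro d
    induction d with
    | zero =>
        intro ex exb ey eyb ez ezb h hd
        by_cases hx : exb = 0
        · exact ⟨0, by simp [hx]⟩
        · exfalso
          rcases upxb ex exb ey eyb ez ezb h hx with h' | h' <;>
          · have := (bound _ _ _ _ _ _ h').2
            simp only [Nat.cast_zero] at hd
            linarith
    | succ d ih =>
        intro ex exb ey eyb ez ezb h hd
        by_cases hx : exb = 0
        · exact ⟨0, by simp [hx]⟩
        · have hd' : M - (exb + 1) ≤ d := by push_cast at hd ⊢; linarith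
          have step : ∃ r : ℕ, exb + 1 = -(r:ℝ) := by
            rcases upxb ex exb ey eyb ez ezb h hx with h' | h'
            · exact ih _ _ _ _ _ _ h' hd'
            · exact ih _ _ _ _ _ _ h' hd'
          obtain ⟨r, hr⟩ := step
          exact ⟨r + 1, by push_cast; linarith⟩
  intro ex exb ey eyb ez ezb h
  obtain ⟨n, hn⟩ := keyx ⌈M - ex⌉₊ ex exb ey eyb ez ezb h (Nat.le_ceil _)
  obtain ⟨r, hr⟩ := keyxb ⌈M - exb⌉₊ ex exb ey eyb ez ezb h (Nat.le_ceil _)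
  have hsum : ex + ey + ez = 0 := by
    rcases mul_eq_zero.1 (h0 ex exb ey eyb ez ezb) with h' | h'
    · exact_mod_cast h'
    · exact absurd h' h
  have hsumb : exb + eyb + ezb = 0 := by
    rcases mul_eq_zero.1 (h0b ex exb ey eyb ez ezb) with h' | h'
    · exact_mod_cast h'
    · exact absurd h' h
  exact ⟨n, r, hn, hr, by linarith, by linarith⟩

/-- `S(x,y,z)` is closed under subtraction. -/
lemma MemS3.sub {a a' : ℝ → ℝ → ℝ → ℝ → ℝ → ℝ → ℂ} (h : MemS3 a) (h' : MemS3 a') :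
    MemS3 (fun ex exb ey eyb ez ezb =>
      a ex exb ey eyb ez ezb - a' ex exb ey eyb ez ezb) := by
  obtain ⟨⟨⟨T, hT⟩, ⟨N, hN⟩, hint, hcnt⟩, e0, e0b, e1, e1b⟩ := h
  obtain ⟨⟨⟨T', hT'⟩, ⟨N', hN'⟩, hint', hcnt'⟩, f0, f0b, f1, f1b⟩ := h'
  have hne : ∀ ex exb ey eyb ez ezb : ℝ,
      a ex exb ey eyb ez ezb - a' ex exb ey eyb ez ezb ≠ 0 →
      a ex exb ey eyb ez ezb ≠ 0 ∨ a' ex exb ey eyb ez ezb ≠ 0 := by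
    intro ex exb ey eyb ez ezb hb
    by_contra hc
    push_neg at hc
    exact hb (by rw [hc.1, hc.2, sub_zero])
  refine ⟨⟨⟨T ∪ T', ?_⟩, ⟨min N N', ?_⟩, ?_, ?_⟩, ?_, ?_, ?_, ?_⟩
  · intro ex exb ey eyb ez ezb hb
    rcases hne _ _ _ _ _ _ hb with H | H
    · obtain ⟨σ, hσ, hrest⟩ := hT _ _ _ _ _ _ H
      exact ⟨σ, Finset.mem_union_left _ hσ, hrest⟩
    · obtain ⟨σ, hσ, hrest⟩ := hT' _ _ _ _ _ _ H
      exact ⟨σ, Finset.mem_union_right _ hσ, hrest⟩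
  · intro ex exb ey eyb ez ezb hb
    rcases hne _ _ _ _ _ _ hb with H | H
    · obtain ⟨u, v⟩ := hN _ _ _ _ _ _ H
      exact ⟨le_trans (min_le_left _ _) u, le_trans (min_le_left _ _) v⟩
    · obtain ⟨u, v⟩ := hN' _ _ _ _ _ _ H
      exact ⟨le_trans (min_le_right _ _) u, le_trans (min_le_right _ _) v⟩
  · intro ex exb ey eyb ez ezb hb
    rcases hne _ _ _ _ _ _ hb with H | H
    · exact hint _ _ _ _ _ _ H
    · exact hint' _ _ _ _ _ _ H
  · refine (hcnt.union hcnt').mono ?_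
    intro e he
    simp only [Set.mem_setOf_eq] at he
    rcases hne _ _ _ _ _ _ he with H | H
    · exact Or.inl H
    · exact Or.inr H
  · intro ex exb ey eyb ez ezb
    rw [mul_sub, e0, f0, sub_zero]
  · intro ex exb ey eyb ez ezb
    rw [mul_sub, e0b, f0b, sub_zero]
  · intro ex exb ey eyb ez ezb
    have := e1 ex exb ey eyb ez ezb
    have := f1 ex exb ey eyb ez ezb
    simp only []
    linear_combination e1 ex exb ey eyb ez ezb - f1 ex exb ey eyb ez ezb
  · intro ex exb ey eyb ez ezb
    simp only []
    linear_combination e1b ex exb ey eyb ez ezb - f1b ex exb ey eyb ez ezb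

/-- An element of `S(x,y,z)` whose evaluation vanishes is zero. -/
lemma memS3_zero {b : ℝ → ℝ → ℝ → ℝ → ℝ → ℝ → ℂ} (hb : MemS3 b)
    (h0 : ∀ m s : ℝ, b 0 0 (-m) (-s) m s = 0) :
    ∀ ex exb ey eyb ez ezb : ℝ, b ex exb ey eyb ez ezb = 0 := by
  have hst := supp_struct hb
  obtain ⟨-, -, -, e1, e1b⟩ := hb
  have key : ∀ n r : ℕ, ∀ ez ezb ex exb ey eyb : ℝ,
      ex = -(n:ℝ) → exb = -(r:ℝ) → ey = (n:ℝ) - ez → eyb = (r:ℝ) - ezb →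
      b ex exb ey eyb ez ezb = 0 := by
    intro n
    induction n with
    | zero =>
        intro r
        induction r with
        | zero =>
            intro ez ezb ex exb ey eyb h1 h2 h3 h4
            rw [show ex = (0:ℝ) by rw [h1]; norm_num,
              show exb = (0:ℝ) by rw [h2]; norm_num,
              show ey = -ez by rw [h3]; norm_num,
              show eyb = -ezb by rw [h4]; norm_num]
            exact h0 ez ezb
        | succ r ih =>
            intro ez ezb ex exb ey eyb h1 h2 h3 h4
            have heq := e1b 0 (-(r:ℝ)) (-ez) ((r:ℝ)+1-ezb) ez ezb
            have t2 : b 0 (-(r:ℝ)) (-ez) ((r:ℝ)+1-ezb-1) ez ezb = 0 :=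
              ih ez ezb 0 (-(r:ℝ)) (-ez) ((r:ℝ)+1-ezb-1) (by norm_num) rfl
                (by norm_num) (by ring)
            have t3 : b 0 (-(r:ℝ)) (-ez) ((r:ℝ)+1-ezb) ez (ezb-1) = 0 :=
              ih ez (ezb-1) 0 (-(r:ℝ)) (-ez) ((r:ℝ)+1-ezb) (by norm_num) rfl
                (by norm_num) (by ring)
            rw [t2, t3, mul_zero, mul_zero, add_zero, add_zero] at heq
            have hcoef : ((-(r:ℝ) - 1 : ℝ) : ℂ) ≠ 0 := by
              rw [Complex.ofReal_ne_zero]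
              have : (0:ℝ) ≤ r := Nat.cast_nonneg r
              intro hh; linarith [hh]
            have hz := (mul_eq_zero.1 heq).resolve_left hcoef
            rw [show ex = (0:ℝ) by rw [h1]; norm_num,
              show exb = -(r:ℝ) - 1 by rw [h2]; push_cast; ring,
              show ey = -ez by rw [h3]; norm_num,
              show eyb = (r:ℝ)+1-ezb by rw [h4]; push_cast; ring]
            exact hz
    | succ n ih =>
        intro r ez ezb ex exb ey eyb h1 h2 h3 h4
        have heq := e1 (-(n:ℝ)) exb ((n:ℝ)+1-ez) eyb ez ezb
        have t2 : b (-(n:ℝ)) exb ((n:ℝ)+1-ez-1) eyb ez ezb = 0 :=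
          ih r ez ezb (-(n:ℝ)) exb ((n:ℝ)+1-ez-1) eyb rfl h2 (by ring) h4
        have t3 : b (-(n:ℝ)) exb ((n:ℝ)+1-ez) eyb (ez-1) ezb = 0 :=
          ih r (ez-1) ezb (-(n:ℝ)) exb ((n:ℝ)+1-ez) eyb rfl h2 (by ring) h4
        rw [t2, t3, mul_zero, mul_zero, add_zero, add_zero] at heq
        have hcoef : ((-(n:ℝ) - 1 : ℝ) : ℂ) ≠ 0 := by
          rw [Complex.ofReal_ne_zero]
          have : (0:ℝ) ≤ n := Nat.cast_nonneg n
          intro hh; linarith [hh]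
        have hz := (mul_eq_zero.1 heq).resolve_left hcoef
        rw [show ex = -(n:ℝ) - 1 by rw [h1]; push_cast; ring,
          show ey = (n:ℝ)+1-ez by rw [h3]; push_cast; ring, h4]
        rw [show eyb = (r:ℝ) - ezb from h4] at hz
        exact hz
  intro ex exb ey eyb ez ezb
  by_cases h : b ex exb ey eyb ez ezb = 0
  · exact h
  · obtain ⟨n, r, h1, h2, h3, h4⟩ := hst _ _ _ _ _ _ h
    exact key n r ez ezb ex exb ey eyb h1 h2 h3 h4

/-- The evaluation of an element of `S(x,y,z)` lies in `ℂ((p,p̄,|p|^ℝ))`. -/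
lemma memC_eval {a : ℝ → ℝ → ℝ → ℝ → ℝ → ℝ → ℂ} (ha : MemS3 a) :
    MemC (evalS3 a) := by
  obtain ⟨⟨-, ⟨N, hN⟩, hint, hcnt⟩, -⟩ := ha
  refine ⟨?_, ?_, N, ?_⟩
  · intro r s h
    exact hint 0 0 (-r) (-s) r s h
  · have hinj : Function.Injective
        (fun p : ℝ × ℝ => ((((0:ℝ),(0:ℝ)) : ℝ × ℝ), (((-p.1, -p.2)) : ℝ × ℝ),
          ((p.1, p.2) : ℝ × ℝ))) := by
      intro p q h
      simp only [Prod.mk.injEq] at h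
      exact Prod.ext h.2.2.1 h.2.2.2
    exact hcnt.preimage hinj
  · intro r s h
    exact hN 0 0 (-r) (-s) r s h

/-- The substitution of the cross-ratio expansion lands in `S(x,y,z)` and inverts
the evaluation map. -/
lemma memS3_aOf {c : ℝ → ℝ → ℂ} (hc : MemC c) :
    MemS3 (aOf c) ∧ evalS3 (aOf c) = c := by
  obtain ⟨hint, hcnt, N, hN⟩ := hc
  constructor
  · refine ⟨⟨⟨{((0:ℝ),(0:ℝ),(0:ℝ),(0:ℝ))}, ?_⟩, ⟨N, ?_⟩, ?_, ?_⟩, ?_, ?_,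
      aOf_eq1 c, aOf_eq2 c⟩
    · intro ex exb ey eyb ez ezb h
      obtain ⟨n, r, h1, h2, h3, h4, -⟩ := aOf_ne h
      exact ⟨((0:ℝ),(0:ℝ),(0:ℝ),(0:ℝ)), Finset.mem_singleton_self _, n, r,
        by simpa using h1, by simpa using h2, by rw [h3]; ring, by rw [h4]; ring⟩
    · intro ex exb ey eyb ez ezb h
      obtain ⟨n, r, -, -, -, -, hA⟩ := aOf_ne h
      obtain ⟨j, l, -, -, hc0⟩ := Arec_supp c n r ez ezb hA
      obtain ⟨u, v⟩ := hN _ _ hc0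
      have hj : (0:ℝ) ≤ j := Nat.cast_nonneg j
      have hl : (0:ℝ) ≤ l := Nat.cast_nonneg l
      exact ⟨by linarith, by linarith⟩
    · intro ex exb ey eyb ez ezb h
      obtain ⟨n, r, -, -, -, -, hA⟩ := aOf_ne h
      obtain ⟨j, l, -, -, hc0⟩ := Arec_supp c n r ez ezb hA
      obtain ⟨m, hm⟩ := hint _ _ hc0
      exact ⟨m + j - l, by push_cast; linarith⟩
    · refine Set.Countable.mono ?_
        (Set.countable_iUnion (fun q : ℕ × ℕ × ℕ × ℕ =>
          hcnt.image (fun p : ℝ × ℝ =>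
            (((-(q.1:ℝ), -(q.2.1:ℝ)) : ℝ × ℝ),
             (((q.1:ℝ) - (p.1 + q.2.2.1), (q.2.1:ℝ) - (p.2 + q.2.2.2)) : ℝ × ℝ),
             ((p.1 + q.2.2.1, p.2 + q.2.2.2) : ℝ × ℝ)))))
      rintro ⟨⟨ex, exb⟩, ⟨ey, eyb⟩, ez, ezb⟩ he
      simp only [Set.mem_setOf_eq] at he
      obtain ⟨n, r, h1, h2, h3, h4, hA⟩ := aOf_ne he
      obtain ⟨j, l, -, -, hc0⟩ := Arec_supp c n r ez ezb hA
      refine Set.mem_iUnion.2 ⟨(n, r, j, l), ⟨(ez - j, ezb - l), hc0, ?_⟩⟩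
      simp only [Prod.mk.injEq]
      refine ⟨⟨h1.symm, h2.symm⟩, ⟨⟨?_, ?_⟩, ?_, ?_⟩⟩ <;>
        [skip; skip; ring; ring]
      · rw [h3]; ring
      · rw [h4]; ring
    · intro ex exb ey eyb ez ezb
      by_cases h : aOf c ex exb ey eyb ez ezb = 0
      · rw [h, mul_zero]
      · obtain ⟨n, r, h1, h2, h3, h4, -⟩ := aOf_ne h
        have : ex + ey + ez = 0 := by rw [h1, h3]; ring
        rw [this]
        simp
    · intro ex exb ey eyb ez ezb
      by_cases h : aOf c ex exb ey eyb ez ezb = 0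
      · rw [h, mul_zero]
      · obtain ⟨n, r, h1, h2, h3, h4, -⟩ := aOf_ne h
        have : exb + eyb + ezb = 0 := by rw [h2, h4]; ring
        rw [this]
        simp
  · funext m s
    show aOf c 0 0 (-m) (-s) m s = c m s
    rw [aOf_struct c (n := 0) (r := 0) (by norm_num) (by norm_num)
      (by norm_num) (by norm_num)]
    rw [Arec]


/-- Every `f ∈ S(x,y,z)` can be written
`f = Σ_{n,r∈ℕ} Σ_{m,s∈ℝ} a_{n,m,r,s} (y/x)ⁿ (z/y)ᵐ (ȳ/x̄)ʳ (z̄/ȳ)ˢ`, and the evaluation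
map `v : S(x,y,z) → ℂ((p,p̄,|p|^ℝ))` (the formal limit `(x,y,z) → (∞,1,p)`) is a linear
isomorphism; its inverse is the substitution of the expansion of the cross-ratio.
(The map `v` is literally coefficient extraction, hence linear; bijectivity is expressed
by injectivity and surjectivity onto `ℂ((p,p̄,|p|^ℝ))`.) -/
theorem eval_S3_linear_iso :
    (∀ a, MemS3 a → ∀ ex exb ey eyb ez ezb : ℝ, a ex exb ey eyb ez ezb ≠ 0 →
      ∃ n r : ℕ, ex = -(n : ℝ) ∧ exb = -(r : ℝ) ∧
        ey = (n : ℝ) - ez ∧ eyb = (r : ℝ) - ezb) ∧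
    (∀ a, MemS3 a → MemC (evalS3 a)) ∧
    (∀ a a', MemS3 a → MemS3 a' → evalS3 a = evalS3 a' → a = a') ∧
    (∀ c, MemC c → ∃ a, MemS3 a ∧ evalS3 a = c) := by
  refine ⟨fun a ha => supp_struct ha, fun a ha => memC_eval ha, ?_,
    fun c hc => ⟨aOf c, (memS3_aOf hc).1, (memS3_aOf hc).2⟩⟩
  intro a a' ha ha' hev
  have hb := MemS3.sub ha ha'
  have h0 : ∀ m s : ℝ, a 0 0 (-m) (-s) m s - a' 0 0 (-m) (-s) m s = 0 := by
    intro m s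
    have := congrFun (congrFun hev m) s
    simpa [evalS3, sub_eq_zero] using this
  have hz := memS3_zero hb h0
  funext ex exb ey eyb ez ezb
  have := hz ex exb ey eyb ez ezb
  simpa [sub_eq_zero] using this
end
end

section
/- Let S''(x,y) be the space of formal series f ∈ ℂ[[y/x, ȳ/x̄]][x^±, x̄^±, |x|^ℝ, y^±, ȳ^±, |y|^ℝ] annihilated by x∂_x + y∂_y, x̄∂_{x̄} + ȳ∂_{ȳ}, x²∂_x + y²∂_y, and x̄²∂_{x̄} + ȳ²∂_{ȳ}. Then S''(x,y) consists exactly of the constant series. -/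
noncomputable section

/-!  **Statement 11.**  Formal series in `x, x̄, y, ȳ` (with real exponents) are encoded
by their coefficient functions `a : ℝ⁴ → ℂ`, where `a s s̄ t t̄` is the coefficient of
`x^s x̄^s̄ y^t ȳ^t̄`.  Membership in
`ℂ[[y/x, ȳ/x̄]][x^±, x̄^±, y^±, ȳ^±, |x|^ℝ, |y|^ℝ]` means the support is contained in
finitely many "cones" `(σ₁ - k, σ₂ - l, σ₃ + k, σ₄ + l)`, `k, l ∈ ℕ`. -/

/-- Membership in `ℂ[[y/x, ȳ/x̄]][x^±, x̄^±, |x|^ℝ, y^±, ȳ^±, |y|^ℝ]`. -/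
def MemT2 (a : ℝ → ℝ → ℝ → ℝ → ℂ) : Prop :=
  ∃ T : Finset (ℝ × ℝ × ℝ × ℝ), ∀ s sb t tb : ℝ, a s sb t tb ≠ 0 →
    ∃ σ ∈ T, ∃ k l : ℕ, s = σ.1 - k ∧ sb = σ.2.1 - l ∧
      t = σ.2.2.1 + k ∧ tb = σ.2.2.2 + l

/-- Auxiliary: if the support of `a` has first coordinate bounded above, the recurrence
`(s-1)a_{s-1,t} + (t-1)a_{s,t-1} = 0` holds, `s + t = 0` and `a s sb t tb ≠ 0`, then
`s ≠ 0` is impossible. -/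
lemma s_eq_zero_aux (a : ℝ → ℝ → ℝ → ℝ → ℂ) (M : ℝ)
    (hbd : ∀ s sb t tb : ℝ, a s sb t tb ≠ 0 → s ≤ M)
    (hD1 : ∀ s sb t tb : ℝ,
      ((s - 1 : ℝ) : ℂ) * a (s - 1) sb t tb + ((t - 1 : ℝ) : ℂ) * a s sb (t - 1) tb = 0)
    (s sb t tb : ℝ) (hst : s + t = 0) (ha : a s sb t tb ≠ 0) (hs : s ≠ 0) : False := by
  have key : ∀ n : ℕ, a (s + n) sb (t - n) tb ≠ 0 ∧ s + (n : ℝ) ≠ 0 := by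
    intro n
    induction n with
    | zero => simpa using ⟨ha, hs⟩
    | succ n ih =>
      have h := hD1 (s + n + 1) sb (t - n) tb
      have e1 : s + (n : ℝ) + 1 - 1 = s + n := by ring
      rw [e1] at h
      have h2 : ((t - n - 1 : ℝ) : ℂ) * a (s + n + 1) sb (t - n - 1) tb ≠ 0 := by
        intro hz
        rw [hz, add_zero] at h
        rcases mul_eq_zero.mp h with h' | h'
        · exact ih.2 (by exact_mod_cast h')
        · exact ih.1 h'
      have htn : t - (n : ℝ) - 1 ≠ 0 := by
        intro hz
        apply h2
        rw [hz]; simp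
      have han : a (s + n + 1) sb (t - n - 1) tb ≠ 0 :=
        fun hz => h2 (by rw [hz, mul_zero])
      constructor
      · have e2 : s + ((n : ℕ) + 1 : ℕ) = s + n + 1 := by push_cast; ring
        rw [e2]
        have e3 : t - ((n : ℕ) + 1 : ℕ) = t - n - 1 := by push_cast; ring
        rw [e3]
        exact han
      · have e4 : s + (((n : ℕ) + 1 : ℕ) : ℝ) = -(t - n - 1) := by push_cast; linarith
        rw [e4]
        exact neg_ne_zero.mpr htn
  obtain ⟨n, hn⟩ := exists_nat_gt (M - s)
  have := hbd _ _ _ _ (key n).1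
  linarith

/-- If a formal series `f = Σ a_{s,s̄,t,t̄} x^s x̄^s̄ y^t ȳ^t̄` in
`ℂ[[y/x, ȳ/x̄]][x^±, x̄^±, |x|^ℝ, y^±, ȳ^±, |y|^ℝ]` is annihilated by
`x∂_x + y∂_y`, `x̄∂_x̄ + ȳ∂_ȳ`, `x²∂_x + y²∂_y` and `x̄²∂_x̄ + ȳ²∂_ȳ` (expressed on
coefficients), then `f` is constant, i.e. its only possibly nonzero coefficient is the
constant one. -/
theorem solutions_S2_are_constant (a : ℝ → ℝ → ℝ → ℝ → ℂ) (hT : MemT2 a)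
    (hD0 : ∀ s sb t tb : ℝ, ((s + t : ℝ) : ℂ) * a s sb t tb = 0)
    (hD0b : ∀ s sb t tb : ℝ, ((sb + tb : ℝ) : ℂ) * a s sb t tb = 0)
    (hD1 : ∀ s sb t tb : ℝ,
      ((s - 1 : ℝ) : ℂ) * a (s - 1) sb t tb + ((t - 1 : ℝ) : ℂ) * a s sb (t - 1) tb = 0)
    (hD1b : ∀ s sb t tb : ℝ,
      ((sb - 1 : ℝ) : ℂ) * a s (sb - 1) t tb + ((tb - 1 : ℝ) : ℂ) * a s sb t (tb - 1) = 0) :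
    ∀ s sb t tb : ℝ, ¬(s = 0 ∧ sb = 0 ∧ t = 0 ∧ tb = 0) → a s sb t tb = 0 := by
  intro s sb t tb hne
  by_contra ha
  obtain ⟨T, hTmem⟩ := hT
  obtain ⟨σ₀, hσ₀T, _⟩ := hTmem s sb t tb ha
  have hTne : T.Nonempty := ⟨σ₀, hσ₀T⟩
  set M : ℝ := T.sup' hTne (fun σ => max σ.1 σ.2.1) with hM
  -- bounds on the support
  have hbd : ∀ u ub v vb : ℝ, a u ub v vb ≠ 0 → u ≤ M ∧ ub ≤ M := by
    intro u ub v vb h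
    obtain ⟨σ, hσ, k, l, h1, h2, _, _⟩ := hTmem u ub v vb h
    have hle := Finset.le_sup' (fun σ : ℝ × ℝ × ℝ × ℝ => max σ.1 σ.2.1) hσ
    constructor
    · have : u ≤ σ.1 := by rw [h1]; simp [Nat.cast_nonneg]
      exact le_trans this (le_trans (le_max_left _ _) hle)
    · have : ub ≤ σ.2.1 := by rw [h2]; simp [Nat.cast_nonneg]
      exact le_trans this (le_trans (le_max_right _ _) hle)
  -- s + t = 0 and sb + tb = 0
  have hst : s + t = 0 := by
    have h := hD0 s sb t tb
    rcases mul_eq_zero.mp h with h' | h'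
    · exact_mod_cast h'
    · exact absurd h' ha
  have hsbtb : sb + tb = 0 := by
    have h := hD0b s sb t tb
    rcases mul_eq_zero.mp h with h' | h'
    · exact_mod_cast h'
    · exact absurd h' ha
  -- s = 0
  have hs0 : s = 0 := by
    by_contra hs
    exact s_eq_zero_aux a M (fun u ub v vb h => (hbd u ub v vb h).1) hD1 s sb t tb hst ha hs
  -- sb = 0, via the swapped series
  have hsb0 : sb = 0 := by
    by_contra hsb
    exact s_eq_zero_aux (fun u ub v vb => a ub u vb v) M
      (fun u ub v vb h => (hbd ub u vb v h).2)
      (fun u ub v vb => hD1b ub u vb v)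
      sb s tb t hsbtb ha hsb
  have ht0 : t = 0 := by linarith
  have htb0 : tb = 0 := by linarith
  exact hne ⟨hs0, hsb0, ht0, htb0⟩
end
end

section
/- If a function μ in the space GCor₂ of generalized two-point functions satisfies ∂μ/∂z̄₁ = 0 and ∂μ/∂z̄₂ = 0, then μ is a Laurent polynomial in ℂ[z₁^±, z₂^±, (z₁−z₂)^±]. -/
noncomputable section

open scoped BigOperators

/-- The single-valued real-power monomial `z^r z̄^s` (principal branch). -/
def rpm (z : ℂ) (r s : ℝ) : ℂ := z ^ (r : ℂ) * (starRingEnd ℂ z) ^ (s : ℂ)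

/-- `f` has a conformal singularity at `0`: it has an absolutely convergent expansion
`Σ_{r,s∈ℝ} a_{r,s} z^r z̄^s` in a punctured disc around `0`, where `a_{r,s} = 0` unless
`r - s ∈ ℤ`, the support is countable and the exponents are bounded below. -/
def ConformalSingAtZero (f : ℂ → ℂ) : Prop :=
  ∃ (a : ℝ → ℝ → ℂ) (R : ℝ), 0 < R ∧
    (∀ r s : ℝ, (∀ k : ℤ, r - s ≠ (k : ℝ)) → a r s = 0) ∧
    (∃ N : ℝ, ∀ r s : ℝ, (r < N ∨ s < N) → a r s = 0) ∧
    Set.Countable {p : ℝ × ℝ | a p.1 p.2 ≠ 0} ∧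
    ∀ z : ℂ, z ≠ 0 → ‖z‖ < R →
      HasSum (fun p : ℝ × ℝ => a p.1 p.2 * rpm z p.1 p.2) (f z)

/-- Membership in `F_{0,1,∞}`: real analytic on `ℂP¹ ∖ {0,1,∞}` with conformal
singularities at `0`, `1` and `∞`. -/
def MemF01inf (f : ℂ → ℂ) : Prop :=
  AnalyticOnNhd ℝ f {z : ℂ | z ≠ 0 ∧ z ≠ 1} ∧
  ConformalSingAtZero f ∧
  ConformalSingAtZero (fun p => f (1 - p)) ∧
  ConformalSingAtZero (fun p => f p⁻¹)

/-- Membership in the space `GCor₂` of generalized two-point functions on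
`Y₂ = {(z₁,z₂) : z₁ ≠ z₂, z₁ ≠ 0, z₂ ≠ 0}`. -/
def MemGCor2 (μ : ℂ → ℂ → ℂ) : Prop :=
  ∃ (k : ℕ) (α₁ α₂ α₃ β₁ β₂ β₃ : Fin k → ℝ) (f : Fin k → ℂ → ℂ),
    (∀ i, MemF01inf (f i)) ∧
    (∀ i, ∃ m : ℤ, α₁ i - β₁ i = (m : ℝ)) ∧
    (∀ i, ∃ m : ℤ, α₂ i - β₂ i = (m : ℝ)) ∧
    (∀ i, ∃ m : ℤ, α₃ i - β₃ i = (m : ℝ)) ∧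
    ∀ z₁ z₂ : ℂ, z₁ ≠ 0 → z₂ ≠ 0 → z₁ ≠ z₂ →
      μ z₁ z₂ = ∑ i, rpm z₁ (α₁ i) (β₁ i) * rpm z₂ (α₂ i) (β₂ i) *
        rpm (z₁ - z₂) (α₃ i) (β₃ i) * f i (z₂ / z₁)



section AuxHolGCor2

open Complex Filter Set Topology Metric

lemma norm_rpm {z : ℂ} (hz : z ≠ 0) (r s : ℝ) : ‖rpm z r s‖ = ‖z‖ ^ (r + s) := by
  have h1 : ‖z ^ (r : ℂ)‖ = ‖z‖ ^ r := by
    rw [norm_cpow_real]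
  have h2 : ‖(starRingEnd ℂ z) ^ (s : ℂ)‖ = ‖z‖ ^ s := by
    rw [norm_cpow_real, Complex.norm_conj]
  have hz' : 0 < ‖z‖ := norm_pos_iff.mpr hz
  rw [rpm, norm_mul, h1, h2, ← Real.rpow_add hz']


lemma neBot_nhdsWithin_compl_finite {s : Set ℂ} (hs : s.Finite) (x : ℂ) :
    (𝓝[sᶜ \ {x}] x).NeBot := by
  have ht : IsClosed (s \ {x}) := (hs.subset diff_subset).isClosed
  have hx : (s \ {x})ᶜ ∈ 𝓝 x := ht.isOpen_compl.mem_nhds (by simp)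
  have heq : 𝓝[({x}ᶜ : Set ℂ)] x = 𝓝[({x}ᶜ : Set ℂ) ∩ (s \ {x})ᶜ] x :=
    nhdsWithin_restrict' _ hx
  have hsub : (({x}ᶜ : Set ℂ) ∩ (s \ {x})ᶜ) ⊆ sᶜ \ {x} := by
    intro z hz
    have hzx : z ≠ x := hz.1
    refine ⟨fun hzs => hz.2 ⟨hzs, hzx⟩, hzx⟩
  have : (𝓝[({x}ᶜ : Set ℂ) ∩ (s \ {x})ᶜ] x).NeBot := by
    rw [← heq]; infer_instance
  exact this.mono (nhdsWithin_mono x hsub)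


lemma growth_of_conformalSing {f : ℂ → ℂ} (hf : ConformalSingAtZero f) :
    ∃ (n : ℕ) (C δ : ℝ), 0 < δ ∧ 0 ≤ C ∧
      ∀ z : ℂ, z ≠ 0 → ‖z‖ < δ → ‖z‖ ^ n * ‖f z‖ ≤ C := by
  obtain ⟨a, R, hR, _hint, ⟨N, hN⟩, _hcnt, hsum⟩ := hf
  set ρ : ℝ := R / 2 with hρdef
  have hρ : 0 < ρ := by positivity
  set n : ℕ := ⌈-2 * N⌉₊ with hn
  have hn2 : -2*N ≤ (n:ℝ) := Nat.le_ceil _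
  have hρC : (ρ:ℂ) ≠ 0 := by exact_mod_cast hρ.ne'
  have habs : ‖(ρ:ℂ)‖ < R := by
    rw [Complex.norm_real, Real.norm_eq_abs, abs_of_pos hρ]; linarith
  have hS := hsum (ρ:ℂ) hρC habs
  have hnorm : ∀ p : ℝ × ℝ, ‖a p.1 p.2 * rpm (ρ:ℂ) p.1 p.2‖
      = ‖a p.1 p.2‖ * ρ ^ (p.1 + p.2) := by
    intro p
    rw [norm_mul, norm_rpm hρC, Complex.norm_real, Real.norm_of_nonneg hρ.le]
  have hg : Summable (fun p : ℝ × ℝ => ‖a p.1 p.2‖ * ρ ^ (p.1 + p.2)) := by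
    have := (summable_norm_iff.mpr hS.summable)
    simpa only [hnorm] using this
  have hgn : Summable (fun p : ℝ × ℝ => ρ ^ (n:ℝ) * (‖a p.1 p.2‖ * ρ ^ (p.1 + p.2))) :=
    hg.mul_left _
  refine ⟨n, ∑' p : ℝ × ℝ, ρ ^ (n:ℝ) * (‖a p.1 p.2‖ * ρ ^ (p.1 + p.2)), ρ, hρ, ?_, ?_⟩
  · exact tsum_nonneg fun p => by positivity
  intro z hz hzρ
  have hz' : 0 < ‖z‖ := norm_pos_iff.mpr hz
  have habsz : ‖z‖ < R := by
    linarith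
  have hSz := hsum z hz habsz
  have key : ∀ p : ℝ × ℝ, ‖z‖ ^ n * ‖a p.1 p.2 * rpm z p.1 p.2‖
      ≤ ρ ^ (n:ℝ) * (‖a p.1 p.2‖ * ρ ^ (p.1 + p.2)) := by
    intro p
    rcases eq_or_ne (a p.1 p.2) 0 with h0 | h0
    · simp only [h0, norm_zero, zero_mul, mul_zero]
      positivity
    · have hrs : N ≤ p.1 ∧ N ≤ p.2 := by
        by_contra hc
        push_neg at hc
        rcases le_or_gt N p.1 with h | h
        · exact h0 (hN _ _ (Or.inr (hc h)))
        · exact h0 (hN _ _ (Or.inl h))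
      have hexp : 0 ≤ (n:ℝ) + (p.1 + p.2) := by linarith [hrs.1, hrs.2, hn2]
      rw [norm_mul, norm_rpm hz, ← mul_assoc, mul_comm (‖z‖^n), mul_assoc]
      rw [← Real.rpow_natCast ‖z‖ n, ← Real.rpow_add hz']
      have hRr : ρ ^ ((n:ℕ):ℝ) * (‖a p.1 p.2‖ * ρ ^ (p.1 + p.2))
          = ‖a p.1 p.2‖ * ρ ^ (((n:ℕ):ℝ) + (p.1 + p.2)) := by
        rw [Real.rpow_add hρ ((n:ℕ):ℝ) (p.1+p.2)]; ring
      rw [hRr]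
      refine mul_le_mul_of_nonneg_left ?_ (norm_nonneg _)
      exact Real.rpow_le_rpow (norm_nonneg z) hzρ.le hexp
  have hsummz : Summable (fun p : ℝ × ℝ => ‖a p.1 p.2 * rpm z p.1 p.2‖) := by
    have h1 : Summable (fun p : ℝ × ℝ => ‖z‖ ^ n * ‖a p.1 p.2 * rpm z p.1 p.2‖) :=
      Summable.of_nonneg_of_le (fun p => by positivity) key hgn
    have h2 := h1.mul_left ((‖z‖ ^ n)⁻¹)
    refine h2.congr fun p => ?_
    rw [← mul_assoc, inv_mul_cancel₀ (pow_ne_zero n hz'.ne'), one_mul]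
  calc ‖z‖ ^ n * ‖f z‖ ≤ ‖z‖ ^ n * ∑' p : ℝ × ℝ, ‖a p.1 p.2 * rpm z p.1 p.2‖ := by
        refine mul_le_mul_of_nonneg_left ?_ (by positivity)
        rw [← hSz.tsum_eq]
        exact norm_tsum_le_tsum_norm hsummz
    _ = ∑' p : ℝ × ℝ, ‖z‖ ^ n * ‖a p.1 p.2 * rpm z p.1 p.2‖ := by
        rw [tsum_mul_left]
    _ ≤ _ := Summable.tsum_le_tsum key (hsummz.mul_left _) hgn

lemma growth_F01inf {f : ℂ → ℂ} (hf : MemF01inf f) :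
    ∃ (n : ℕ) (C : ℝ), 0 ≤ C ∧ ∀ q : ℂ, q ≠ 0 → q ≠ 1 →
      ‖q‖ ^ n * ‖q - 1‖ ^ n * ‖f q‖ ≤ C * (1 + ‖q‖) ^ (3 * n) := by
  obtain ⟨hA, h0, h1, hinf⟩ := hf
  obtain ⟨n₀, C₀, δ₀, hδ₀, hC₀, H₀⟩ := growth_of_conformalSing h0
  obtain ⟨n₁, C₁, δ₁, hδ₁, hC₁, H₁⟩ := growth_of_conformalSing h1
  obtain ⟨n₂, C₂, δ₂, hδ₂, hC₂, H₂⟩ := growth_of_conformalSing hinf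
  set n : ℕ := max (max n₀ n₁) n₂ with hn
  have hn₀ : n₀ ≤ n := le_trans (le_max_left _ _) (le_max_left _ _)
  have hn₁ : n₁ ≤ n := le_trans (le_max_right _ _) (le_max_left _ _)
  have hn₂ : n₂ ≤ n := le_max_right _ _
  -- middle compact region
  set M : Set ℂ := {q : ℂ | δ₀ ≤ ‖q‖ ∧ δ₁ ≤ ‖q - 1‖ ∧ ‖q‖ ≤ δ₂⁻¹} with hM
  have hMcl : IsClosed M := by
    have c1 : IsClosed {q : ℂ | δ₀ ≤ ‖q‖} := isClosed_le continuous_const continuous_norm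
    have c2 : IsClosed {q : ℂ | δ₁ ≤ ‖q - 1‖} :=
      isClosed_le continuous_const ((continuous_sub_right 1).norm)
    have c3 : IsClosed {q : ℂ | ‖q‖ ≤ δ₂⁻¹} := isClosed_le continuous_norm continuous_const
    exact c1.inter (c2.inter c3)
  have hMbd : Bornology.IsBounded M := by
    refine (Metric.isBounded_closedBall (x := (0:ℂ)) (r := δ₂⁻¹)).subset ?_
    intro q hq
    simpa [Metric.mem_closedBall, dist_eq_norm] using hq.2.2
  have hMcp : IsCompact M := Metric.isCompact_of_isClosed_isBounded hMcl hMbd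
  have hMsub : M ⊆ {z : ℂ | z ≠ 0 ∧ z ≠ 1} := by
    intro q hq
    obtain ⟨a1, a2, -⟩ := hq
    refine ⟨norm_pos_iff.mp (lt_of_lt_of_le hδ₀ a1), ?_⟩
    have h2 : 0 < ‖q - 1‖ := lt_of_lt_of_le hδ₁ a2
    intro h; rw [h] at h2; simp at h2
  have hfc : ContinuousOn f M := fun x hx =>
    ((hA x (hMsub hx)).continuousAt).continuousWithinAt
  obtain ⟨CM, hCM⟩ := hMcp.exists_bound_of_continuousOn hfc
  -- the four constants
  set K₀ : ℝ := (max δ₀ 1) ^ n * C₀ with hK₀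
  set K₁ : ℝ := (max δ₁ 1) ^ n * C₁ with hK₁
  set KM : ℝ := (δ₂⁻¹) ^ n * (1 + δ₂⁻¹) ^ n * max CM 0 with hKM
  have hK₀0 : 0 ≤ K₀ := by positivity
  have hK₁0 : 0 ≤ K₁ := by positivity
  have hKM0 : 0 ≤ KM := by positivity
  have hC₂0 : 0 ≤ C₂ := hC₂
  refine ⟨n, K₀ + K₁ + C₂ + KM, by positivity, ?_⟩
  intro q hq0 hq1
  have hq0' : 0 < ‖q‖ := norm_pos_iff.mpr hq0
  have hq1' : 0 < ‖q - 1‖ := by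
    rw [norm_pos_iff]; exact sub_ne_zero.mpr hq1
  have h1q : (1:ℝ) ≤ 1 + ‖q‖ := by linarith [norm_nonneg q]
  have h1q0 : (0:ℝ) < 1 + ‖q‖ := by linarith
  have hq1le : ‖q - 1‖ ≤ 1 + ‖q‖ := by
    calc ‖q - 1‖ ≤ ‖q‖ + ‖(1:ℂ)‖ := norm_sub_le _ _
      _ = ‖q‖ + 1 := by simp
      _ = 1 + ‖q‖ := by ring
  have hqle : ‖q‖ ≤ 1 + ‖q‖ := by linarith
  have hpow3 : (1 + ‖q‖) ^ n ≤ (1 + ‖q‖) ^ (3 * n) :=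
    pow_le_pow_right₀ h1q (by omega)
  have hpow23 : (1 + ‖q‖) ^ (2 * n) ≤ (1 + ‖q‖) ^ (3 * n) :=
    pow_le_pow_right₀ h1q (by omega)
  have hone3 : (1:ℝ) ≤ (1 + ‖q‖) ^ (3 * n) := one_le_pow₀ h1q
  -- bound in each of the four regimes, then combine
  have main : ‖q‖ ^ n * ‖q - 1‖ ^ n * ‖f q‖ ≤ (K₀ + K₁ + C₂ + KM) * (1 + ‖q‖) ^ (3 * n) := by
    rcases lt_or_ge ‖q‖ δ₀ with hc0 | hc0
    · -- near zero
      have hb := H₀ q hq0 hc0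
      have e : ‖q‖ ^ n * ‖q - 1‖ ^ n * ‖f q‖
          = (‖q‖ ^ (n - n₀) * ‖q - 1‖ ^ n) * (‖q‖ ^ n₀ * ‖f q‖) := by
        rw [← pow_sub_mul_pow ‖q‖ hn₀]; ring
      have step : (‖q‖ ^ (n - n₀) * ‖q - 1‖ ^ n) * (‖q‖ ^ n₀ * ‖f q‖)
          ≤ ((max δ₀ 1) ^ n * (1 + ‖q‖) ^ n) * C₀ := by
        refine mul_le_mul ?_ hb (by positivity) (by positivity)
        refine mul_le_mul ?_ (pow_le_pow_left₀ (norm_nonneg _) hq1le n) (by positivity)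
          (by positivity)
        calc ‖q‖ ^ (n - n₀) ≤ (max δ₀ 1) ^ (n - n₀) :=
              pow_le_pow_left₀ (norm_nonneg _) (le_trans hc0.le (le_max_left _ _)) _
          _ ≤ (max δ₀ 1) ^ n := pow_le_pow_right₀ (le_max_right _ _) (by omega)
      calc ‖q‖ ^ n * ‖q - 1‖ ^ n * ‖f q‖ ≤ ((max δ₀ 1) ^ n * (1 + ‖q‖) ^ n) * C₀ := by
            rw [e]; exact step
        _ = K₀ * (1 + ‖q‖) ^ n := by rw [hK₀]; ring
        _ ≤ K₀ * (1 + ‖q‖) ^ (3 * n) := by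
            exact mul_le_mul_of_nonneg_left hpow3 hK₀0
        _ ≤ _ := mul_le_mul_of_nonneg_right (by linarith) (by positivity)
    rcases lt_or_ge ‖q - 1‖ δ₁ with hc1 | hc1
    · -- near one
      have h1mq : (1:ℂ) - q ≠ 0 := by
        intro h; apply hq1; have : (1:ℂ) = q := by linear_combination h
        exact this.symm
      have hb := H₁ (1 - q) h1mq (by simpa [norm_sub_rev] using hc1)
      simp only [sub_sub_cancel] at hb
      have hnq : ‖(1:ℂ) - q‖ = ‖q - 1‖ := norm_sub_rev _ _
      rw [hnq] at hb
      have e : ‖q‖ ^ n * ‖q - 1‖ ^ n * ‖f q‖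
          = (‖q - 1‖ ^ (n - n₁) * ‖q‖ ^ n) * (‖q - 1‖ ^ n₁ * ‖f q‖) := by
        rw [← pow_sub_mul_pow ‖q - 1‖ hn₁]; ring
      have step : (‖q - 1‖ ^ (n - n₁) * ‖q‖ ^ n) * (‖q - 1‖ ^ n₁ * ‖f q‖)
          ≤ ((max δ₁ 1) ^ n * (1 + ‖q‖) ^ n) * C₁ := by
        refine mul_le_mul ?_ hb (by positivity) (by positivity)
        refine mul_le_mul ?_ (pow_le_pow_left₀ (norm_nonneg _) hqle n) (by positivity)
          (by positivity)
        calc ‖q - 1‖ ^ (n - n₁) ≤ (max δ₁ 1) ^ (n - n₁) :=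
              pow_le_pow_left₀ (norm_nonneg _) (le_trans hc1.le (le_max_left _ _)) _
          _ ≤ (max δ₁ 1) ^ n := pow_le_pow_right₀ (le_max_right _ _) (by omega)
      calc ‖q‖ ^ n * ‖q - 1‖ ^ n * ‖f q‖ ≤ ((max δ₁ 1) ^ n * (1 + ‖q‖) ^ n) * C₁ := by
            rw [e]; exact step
        _ = K₁ * (1 + ‖q‖) ^ n := by rw [hK₁]; ring
        _ ≤ K₁ * (1 + ‖q‖) ^ (3 * n) := mul_le_mul_of_nonneg_left hpow3 hK₁0
        _ ≤ _ := mul_le_mul_of_nonneg_right (by linarith) (by positivity)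
    rcases lt_or_ge δ₂⁻¹ ‖q‖ with hc2 | hc2
    · -- near infinity
      have hqinv : q⁻¹ ≠ 0 := inv_ne_zero hq0
      have hninv : ‖q⁻¹‖ < δ₂ := by
        rw [norm_inv]
        exact (inv_lt_comm₀ hq0' hδ₂).mpr hc2
      have hb := H₂ q⁻¹ hqinv hninv
      simp only [inv_inv] at hb
      rw [norm_inv, inv_pow] at hb
      have hfq : ‖f q‖ ≤ C₂ * ‖q‖ ^ n₂ := by
        rw [inv_mul_le_iff₀ (by positivity)] at hb
        calc ‖f q‖ ≤ ‖q‖ ^ n₂ * C₂ := hb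
          _ = C₂ * ‖q‖ ^ n₂ := by ring
      calc ‖q‖ ^ n * ‖q - 1‖ ^ n * ‖f q‖
          ≤ (1 + ‖q‖) ^ n * (1 + ‖q‖) ^ n * (C₂ * (1 + ‖q‖) ^ n) := by
            refine mul_le_mul (mul_le_mul (pow_le_pow_left₀ (norm_nonneg _) hqle n)
              (pow_le_pow_left₀ (norm_nonneg _) hq1le n) (by positivity) (by positivity)) ?_
              (norm_nonneg _) (by positivity)
            refine le_trans hfq (mul_le_mul_of_nonneg_left ?_ hC₂0)
            calc ‖q‖ ^ n₂ ≤ (1 + ‖q‖) ^ n₂ := pow_le_pow_left₀ (norm_nonneg _) hqle n₂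
              _ ≤ (1 + ‖q‖) ^ n := pow_le_pow_right₀ h1q hn₂
        _ = C₂ * (1 + ‖q‖) ^ (3 * n) := by
            rw [show 3 * n = n + n + n from by ring, pow_add, pow_add]; ring
        _ ≤ _ := mul_le_mul_of_nonneg_right (by linarith) (by positivity)
    · -- middle region
      have hqM : q ∈ M := ⟨hc0, hc1, hc2⟩
      have hb := hCM q hqM
      have hCM0 : ‖f q‖ ≤ max CM 0 := le_trans hb (le_max_left _ _)
      calc ‖q‖ ^ n * ‖q - 1‖ ^ n * ‖f q‖
          ≤ (δ₂⁻¹) ^ n * (1 + δ₂⁻¹) ^ n * max CM 0 := by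
            refine mul_le_mul (mul_le_mul (pow_le_pow_left₀ (norm_nonneg _) hc2 n)
              (pow_le_pow_left₀ (norm_nonneg _) ?_ n) (by positivity) (by positivity))
              hCM0 (norm_nonneg _) (by positivity)
            calc ‖q - 1‖ ≤ 1 + ‖q‖ := hq1le
              _ ≤ 1 + δ₂⁻¹ := by linarith
        _ = KM := rfl
        _ ≤ KM * (1 + ‖q‖) ^ (3 * n) := le_mul_of_one_le_right hKM0 hone3
        _ ≤ _ := mul_le_mul_of_nonneg_right (by linarith) (by positivity)
  exact main

lemma rpow_le_P {x P : ℝ} (hx : 0 < x) (hP1 : 1 ≤ P) (hxP : x ≤ P) {t : ℝ} (ht : 0 ≤ t)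
    {d : ℕ} (htd : t ≤ (d:ℝ)) : x ^ t ≤ P ^ d := by
  calc x ^ t ≤ P ^ t := Real.rpow_le_rpow hx.le hxP ht
    _ ≤ P ^ (d:ℝ) := Real.rpow_le_rpow_of_exponent_le hP1 htd
    _ = P ^ d := Real.rpow_natCast P d


lemma growth_mu (μ : ℂ → ℂ → ℂ) (hμ : MemGCor2 μ) :
    ∃ (A B Cn D : ℕ) (K : ℝ), 0 ≤ K ∧ ∀ z₁ z₂ : ℂ, z₁ ≠ 0 → z₂ ≠ 0 → z₁ ≠ z₂ →
      ‖z₁ ^ A * z₂ ^ B * (z₁ - z₂) ^ Cn * μ z₁ z₂‖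
        ≤ K * ((1 + ‖z₁‖) * (1 + ‖z₂‖)) ^ D := by
  obtain ⟨k, α₁, α₂, α₃, β₁, β₂, β₃, f, hf, -, -, -, heq⟩ := hμ
  choose n C hC0 hCb using fun i => growth_F01inf (hf i)
  set u : Fin k → ℝ := fun i => α₁ i + β₁ i - n i with hu
  set v : Fin k → ℝ := fun i => α₂ i + β₂ i - n i with hv
  set w : Fin k → ℝ := fun i => α₃ i + β₃ i - n i with hw
  set A : ℕ := Finset.univ.sup fun i => ⌈-(u i)⌉₊ with hA
  set B : ℕ := Finset.univ.sup fun i => ⌈-(v i)⌉₊ with hB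
  set Cn : ℕ := Finset.univ.sup fun i => ⌈-(w i)⌉₊ with hCn
  set D1 : ℕ := Finset.univ.sup fun i => ⌈(A:ℝ) + u i⌉₊ with hD1
  set D2 : ℕ := Finset.univ.sup fun i => ⌈(B:ℝ) + v i⌉₊ with hD2
  set D3 : ℕ := Finset.univ.sup fun i => ⌈(Cn:ℝ) + w i⌉₊ with hD3
  set D4 : ℕ := Finset.univ.sup fun i => 3 * n i with hD4
  have hAu : ∀ i, 0 ≤ (A:ℝ) + u i := by
    intro i
    have h1 : -(u i) ≤ (⌈-(u i)⌉₊ : ℝ) := Nat.le_ceil _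
    have h2 : (⌈-(u i)⌉₊ : ℝ) ≤ (A:ℝ) := by
      exact_mod_cast Finset.le_sup (f := fun i => ⌈-(u i)⌉₊) (Finset.mem_univ i)
    linarith
  have hBv : ∀ i, 0 ≤ (B:ℝ) + v i := by
    intro i
    have h1 : -(v i) ≤ (⌈-(v i)⌉₊ : ℝ) := Nat.le_ceil _
    have h2 : (⌈-(v i)⌉₊ : ℝ) ≤ (B:ℝ) := by
      exact_mod_cast Finset.le_sup (f := fun i => ⌈-(v i)⌉₊) (Finset.mem_univ i)
    linarith
  have hCw : ∀ i, 0 ≤ (Cn:ℝ) + w i := by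
    intro i
    have h1 : -(w i) ≤ (⌈-(w i)⌉₊ : ℝ) := Nat.le_ceil _
    have h2 : (⌈-(w i)⌉₊ : ℝ) ≤ (Cn:ℝ) := by
      exact_mod_cast Finset.le_sup (f := fun i => ⌈-(w i)⌉₊) (Finset.mem_univ i)
    linarith
  have hD1b : ∀ i, (A:ℝ) + u i ≤ (D1:ℝ) := fun i =>
    le_trans (Nat.le_ceil _) (by
      exact_mod_cast Finset.le_sup (f := fun i => ⌈(A:ℝ) + u i⌉₊) (Finset.mem_univ i))
  have hD2b : ∀ i, (B:ℝ) + v i ≤ (D2:ℝ) := fun i =>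
    le_trans (Nat.le_ceil _) (by
      exact_mod_cast Finset.le_sup (f := fun i => ⌈(B:ℝ) + v i⌉₊) (Finset.mem_univ i))
  have hD3b : ∀ i, (Cn:ℝ) + w i ≤ (D3:ℝ) := fun i =>
    le_trans (Nat.le_ceil _) (by
      exact_mod_cast Finset.le_sup (f := fun i => ⌈(Cn:ℝ) + w i⌉₊) (Finset.mem_univ i))
  have hD4b : ∀ i, ((3 * n i : ℕ):ℝ) ≤ (D4:ℝ) := fun i => by
    exact_mod_cast Finset.le_sup (f := fun i => 3 * n i) (Finset.mem_univ i)
  refine ⟨A, B, Cn, D1 + D2 + D3 + D4, ∑ i, C i, Finset.sum_nonneg fun i _ => hC0 i, ?_⟩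
  intro z₁ z₂ hz₁ hz₂ hne
  set x : ℝ := ‖z₁‖ with hxdef
  set y : ℝ := ‖z₂‖ with hydef
  set wn : ℝ := ‖z₁ - z₂‖ with hwdef
  have hx : 0 < x := norm_pos_iff.mpr hz₁
  have hy : 0 < y := norm_pos_iff.mpr hz₂
  have hwn : 0 < wn := norm_pos_iff.mpr (sub_ne_zero.mpr hne)
  set P : ℝ := (1 + x) * (1 + y) with hP
  have hP1 : (1:ℝ) ≤ P := by nlinarith
  have hxP : x ≤ P := by nlinarith
  have hyP : y ≤ P := by nlinarith
  have hxyP : x + y ≤ P := by nlinarith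
  have hwP : wn ≤ P := le_trans (norm_sub_le _ _) hxyP
  -- the quotient point
  set q : ℂ := z₂ / z₁ with hq
  have hq0 : q ≠ 0 := div_ne_zero hz₂ hz₁
  have hq1 : q ≠ 1 := by
    intro h
    rw [hq, div_eq_iff hz₁, one_mul] at h
    exact hne h.symm
  have hnq : ‖q‖ = y / x := by rw [hq, norm_div]
  have hnq1 : ‖q - 1‖ = wn / x := by
    have : q - 1 = (z₂ - z₁) / z₁ := by
      rw [hq]; field_simp
    rw [this, norm_div, norm_sub_rev]
  have hnq2 : 1 + ‖q‖ = (x + y) / x := by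
    rw [hnq]; field_simp
  -- per-term bound
  have key : ∀ i : Fin k,
      x ^ A * y ^ B * wn ^ Cn *
        ‖rpm z₁ (α₁ i) (β₁ i) * rpm z₂ (α₂ i) (β₂ i) *
          rpm (z₁ - z₂) (α₃ i) (β₃ i) * f i q‖
      ≤ C i * P ^ (D1 + D2 + D3 + D4) := by
    intro i
    have hL2 := hCb i q hq0 hq1
    rw [hnq2, hnq1, hnq] at hL2
    have hterm : ‖rpm z₁ (α₁ i) (β₁ i) * rpm z₂ (α₂ i) (β₂ i) *
        rpm (z₁ - z₂) (α₃ i) (β₃ i) * f i q‖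
        = x ^ (α₁ i + β₁ i) * y ^ (α₂ i + β₂ i) * wn ^ (α₃ i + β₃ i) * ‖f i q‖ := by
      rw [norm_mul, norm_mul, norm_mul, norm_rpm hz₁, norm_rpm hz₂,
        norm_rpm (sub_ne_zero.mpr hne)]
    rw [hterm]
    set a1 : ℝ := α₁ i + β₁ i
    set a2 : ℝ := α₂ i + β₂ i
    set a3 : ℝ := α₃ i + β₃ i
    set G : ℝ := x ^ ((A:ℝ) + a1 + 2 * n i) * y ^ ((B:ℝ) + a2 - n i)
      * wn ^ ((Cn:ℝ) + a3 - n i) with hG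
    have hGpos : 0 < G := by
      rw [hG]
      positivity
    have hmul := mul_le_mul_of_nonneg_left hL2 hGpos.le
    have hxne : x ≠ 0 := hx.ne'
    have hxy : (0:ℝ) < x + y := by positivity
    have hco : G * ((y / x) ^ n i * (wn / x) ^ n i)
        = x ^ A * y ^ B * wn ^ Cn * (x ^ a1 * y ^ a2 * wn ^ a3) := by
      rw [hG]
      rw [← Real.rpow_natCast (y/x) (n i), ← Real.rpow_natCast (wn/x) (n i),
        ← Real.rpow_natCast x A, ← Real.rpow_natCast y B, ← Real.rpow_natCast wn Cn]
      rw [Real.div_rpow hy.le hx.le, Real.div_rpow hwn.le hx.le]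
      simp only [Real.rpow_def_of_pos hx, Real.rpow_def_of_pos hy,
        Real.rpow_def_of_pos hwn, div_eq_mul_inv, ← Real.exp_neg, ← Real.exp_add]
      rw [Real.exp_eq_exp]
      ring
    have hco2 : G * ((x + y) / x) ^ (3 * n i)
        = x ^ ((A:ℝ) + u i) * y ^ ((B:ℝ) + v i) * wn ^ ((Cn:ℝ) + w i)
          * (x + y) ^ ((3 * n i : ℕ) : ℝ) := by
      rw [hG]
      rw [← Real.rpow_natCast ((x+y)/x) (3 * n i)]
      rw [Real.div_rpow hxy.le hx.le]
      simp only [hu, hv, hw, Real.rpow_def_of_pos hx, Real.rpow_def_of_pos hy,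
        Real.rpow_def_of_pos hwn, Real.rpow_def_of_pos hxy, div_eq_mul_inv,
        ← Real.exp_neg, ← Real.exp_add]
      rw [Real.exp_eq_exp]
      push_cast
      ring
    have step1 : x ^ A * y ^ B * wn ^ Cn * (x ^ a1 * y ^ a2 * wn ^ a3 * ‖f i q‖)
        ≤ G * (C i * ((x + y) / x) ^ (3 * n i)) := by
      calc x ^ A * y ^ B * wn ^ Cn * (x ^ a1 * y ^ a2 * wn ^ a3 * ‖f i q‖)
          = G * ((y / x) ^ n i * (wn / x) ^ n i * ‖f i q‖) := by
            linear_combination (‖f i q‖) * hco.symm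
        _ ≤ _ := hmul
    have step2 : G * (C i * ((x + y) / x) ^ (3 * n i))
        = C i * (x ^ ((A:ℝ) + u i) * y ^ ((B:ℝ) + v i) * wn ^ ((Cn:ℝ) + w i)
          * (x + y) ^ ((3 * n i : ℕ) : ℝ)) := by
      rw [← hco2]; ring
    have step3 : x ^ ((A:ℝ) + u i) * y ^ ((B:ℝ) + v i) * wn ^ ((Cn:ℝ) + w i)
          * (x + y) ^ ((3 * n i : ℕ) : ℝ) ≤ P ^ (D1 + D2 + D3 + D4) := by
      have b1 : x ^ ((A:ℝ) + u i) ≤ P ^ D1 := rpow_le_P hx hP1 hxP (hAu i) (hD1b i)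
      have b2 : y ^ ((B:ℝ) + v i) ≤ P ^ D2 := rpow_le_P hy hP1 hyP (hBv i) (hD2b i)
      have b3 : wn ^ ((Cn:ℝ) + w i) ≤ P ^ D3 := rpow_le_P hwn hP1 hwP (hCw i) (hD3b i)
      have b4 : (x + y) ^ ((3 * n i : ℕ) : ℝ) ≤ P ^ D4 :=
        rpow_le_P hxy hP1 hxyP (by positivity) (hD4b i)
      calc x ^ ((A:ℝ) + u i) * y ^ ((B:ℝ) + v i) * wn ^ ((Cn:ℝ) + w i)
          * (x + y) ^ ((3 * n i : ℕ) : ℝ)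
          ≤ P ^ D1 * (P ^ D2) * (P ^ D3) * (P ^ D4) := by
            have p1 : (0:ℝ) < x ^ ((A:ℝ) + u i) := Real.rpow_pos_of_pos hx _
            have p2 : (0:ℝ) < y ^ ((B:ℝ) + v i) := Real.rpow_pos_of_pos hy _
            have p3 : (0:ℝ) < wn ^ ((Cn:ℝ) + w i) := Real.rpow_pos_of_pos hwn _
            have p4 : (0:ℝ) < (x + y) ^ ((3 * n i : ℕ) : ℝ) := Real.rpow_pos_of_pos hxy _
            have hP0 : (0:ℝ) < P := by linarith
            refine mul_le_mul (mul_le_mul (mul_le_mul b1 b2 p2.le (by positivity))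
              b3 p3.le (by positivity)) b4 p4.le (by positivity)
        _ = P ^ (D1 + D2 + D3 + D4) := by rw [pow_add, pow_add, pow_add]
    calc x ^ A * y ^ B * wn ^ Cn * (x ^ a1 * y ^ a2 * wn ^ a3 * ‖f i q‖)
        ≤ G * (C i * ((x + y) / x) ^ (3 * n i)) := step1
      _ = C i * (x ^ ((A:ℝ) + u i) * y ^ ((B:ℝ) + v i) * wn ^ ((Cn:ℝ) + w i)
          * (x + y) ^ ((3 * n i : ℕ) : ℝ)) := step2
      _ ≤ C i * P ^ (D1 + D2 + D3 + D4) := mul_le_mul_of_nonneg_left step3 (hC0 i)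
  -- assemble
  have hμeq := heq z₁ z₂ hz₁ hz₂ hne
  have hnorm : ‖z₁ ^ A * z₂ ^ B * (z₁ - z₂) ^ Cn * μ z₁ z₂‖
      = x ^ A * y ^ B * wn ^ Cn * ‖μ z₁ z₂‖ := by
    rw [norm_mul, norm_mul, norm_mul, norm_pow, norm_pow, norm_pow]
  rw [hnorm, hμeq]
  calc x ^ A * y ^ B * wn ^ Cn * ‖∑ i, rpm z₁ (α₁ i) (β₁ i) * rpm z₂ (α₂ i) (β₂ i) *
        rpm (z₁ - z₂) (α₃ i) (β₃ i) * f i (z₂ / z₁)‖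
      ≤ x ^ A * y ^ B * wn ^ Cn * ∑ i, ‖rpm z₁ (α₁ i) (β₁ i) * rpm z₂ (α₂ i) (β₂ i) *
        rpm (z₁ - z₂) (α₃ i) (β₃ i) * f i (z₂ / z₁)‖ := by
        refine mul_le_mul_of_nonneg_left (norm_sum_le _ _) (by positivity)
    _ = ∑ i, x ^ A * y ^ B * wn ^ Cn * ‖rpm z₁ (α₁ i) (β₁ i) * rpm z₂ (α₂ i) (β₂ i) *
        rpm (z₁ - z₂) (α₃ i) (β₃ i) * f i (z₂ / z₁)‖ := Finset.mul_sum _ _ _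
    _ ≤ ∑ i, C i * P ^ (D1 + D2 + D3 + D4) := Finset.sum_le_sum fun i _ => key i
    _ = (∑ i, C i) * P ^ (D1 + D2 + D3 + D4) := (Finset.sum_mul _ _ _).symm

lemma entire_extension (h : ℂ → ℂ) (s : Finset ℂ)
    (hd : DifferentiableOn ℂ h ((s : Set ℂ))ᶜ) (K : ℝ) (D : ℕ)
    (hb : ∀ z ∉ s, ‖h z‖ ≤ K * (1 + ‖z‖) ^ D) :
    ∃ H : ℂ → ℂ, Differentiable ℂ H ∧ (∀ z ∉ s, H z = h z) ∧
      ∀ z, ‖H z‖ ≤ K * (1 + ‖z‖) ^ D := by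
  classical
  have hK : 0 ≤ K := by
    obtain ⟨z, hz⟩ := Infinite.exists_notMem_finset s
    have h1 := hb z hz
    have h2 : (0:ℝ) ≤ ‖h z‖ := norm_nonneg _
    nlinarith [pow_pos (show (0:ℝ) < 1 + ‖z‖ by positivity) D]
  set H : ℂ → ℂ := fun z => if z ∈ (s : Set ℂ) then limUnder (𝓝[≠] z) h else h z with hH
  have hagree : ∀ z ∉ s, H z = h z := by
    intro z hz
    have : z ∉ (s : Set ℂ) := by simpa using hz
    simp only [hH, if_neg this]
  have hopen : IsOpen ((s : Set ℂ))ᶜ := (s.finite_toSet.isClosed).isOpen_compl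
  have hdiff : Differentiable ℂ H := by
    intro c
    by_cases hc : c ∈ s
    · -- removable singularity at c
      have hcl : IsClosed ((s : Set ℂ) \ {c}) :=
        ((s.finite_toSet.subset diff_subset).isClosed)
      have hcc : c ∉ (s : Set ℂ) \ {c} := by simp
      obtain ⟨r, hr, hball⟩ := Metric.isOpen_iff.mp hcl.isOpen_compl c hcc
      have hsub : ball c r \ {c} ⊆ ((s : Set ℂ))ᶜ := by
        intro z hz
        intro hzs
        exact (hball hz.1) ⟨hzs, hz.2⟩
      have hd' : DifferentiableOn ℂ h (ball c r \ {c}) := hd.mono hsub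
      have hbdd : BddAbove (norm ∘ h '' (ball c r \ {c})) := by
        refine ⟨K * (1 + (‖c‖ + r)) ^ D, ?_⟩
        rintro - ⟨z, hz, rfl⟩
        have hzs : z ∉ s := fun hzs => (hball hz.1) ⟨hzs, hz.2⟩
        have hzn : ‖z‖ ≤ ‖c‖ + r := by
          have := mem_ball_iff_norm.mp hz.1
          calc ‖z‖ = ‖c + (z - c)‖ := by ring_nf
            _ ≤ ‖c‖ + ‖z - c‖ := norm_add_le _ _
            _ ≤ ‖c‖ + r := by linarith [le_of_lt this]
        calc (norm ∘ h) z ≤ K * (1 + ‖z‖) ^ D := hb z hzs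
          _ ≤ K * (1 + (‖c‖ + r)) ^ D := by
              refine mul_le_mul_of_nonneg_left (pow_le_pow_left₀ (by positivity)
                (by linarith) D) hK
      have hupd := Complex.differentiableOn_update_limUnder_of_bddAbove
        (Metric.ball_mem_nhds c hr) hd' hbdd
      have hcongr : EqOn H (Function.update h c (limUnder (𝓝[≠] c) h)) (ball c r) := by
        intro z hz
        by_cases hzc : z = c
        · subst hzc
          have : z ∈ (s : Set ℂ) := by simpa using hc
          simp only [hH, if_pos this, Function.update_self]
        · have hzs : z ∉ (s : Set ℂ) := fun hzs => (hball hz) ⟨hzs, hzc⟩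
          simp only [hH, if_neg hzs, Function.update_of_ne hzc]
      have : DifferentiableOn ℂ H (ball c r) := hupd.congr hcongr
      exact this.differentiableAt (Metric.ball_mem_nhds c hr)
    · have hdiffc : DifferentiableAt ℂ h c :=
        hd.differentiableAt (hopen.mem_nhds hc)
      refine hdiffc.congr_of_eventuallyEq ?_
      filter_upwards [hopen.mem_nhds hc] with z hz
      exact hagree z hz
  refine ⟨H, hdiff, hagree, ?_⟩
  intro z
  by_cases hz : z ∈ s
  · -- bound at removed points via continuity
    have hne : (𝓝[((s : Set ℂ))ᶜ \ {z}] z).NeBot :=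
      neBot_nhdsWithin_compl_finite s.finite_toSet z
    have h1 : Tendsto (fun w => ‖H w‖) (𝓝[((s : Set ℂ))ᶜ \ {z}] z) (𝓝 ‖H z‖) :=
      ((hdiff.continuous.norm).tendsto z).mono_left nhdsWithin_le_nhds
    have h2 : Tendsto (fun w => K * (1 + ‖w‖) ^ D) (𝓝[((s : Set ℂ))ᶜ \ {z}] z)
        (𝓝 (K * (1 + ‖z‖) ^ D)) := by
      refine Tendsto.mono_left ?_ nhdsWithin_le_nhds
      exact (continuous_const.mul ((continuous_const.add continuous_norm).pow D)).tendsto z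
    refine le_of_tendsto_of_tendsto h1 h2 ?_
    filter_upwards [self_mem_nhdsWithin] with w hw
    have hw1 : w ∉ s := by simpa using hw.1
    rw [hagree w hw1]
    exact hb w hw1
  · rw [hagree z hz]; exact hb z hz


lemma entire_poly_growth (H : ℂ → ℂ) (hH : Differentiable ℂ H) (K : ℝ) (D : ℕ)
    (hb : ∀ z, ‖H z‖ ≤ K * (1 + ‖z‖) ^ D) :
    ∃ e : ℕ → ℂ, ∀ z : ℂ, H z = ∑ j ∈ Finset.range (D + 1), e j * z ^ j := by
  set p := cauchyPowerSeries H 0 1 with hp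
  have hball : HasFPowerSeriesOnBall H p 0 ⊤ := hH.hasFPowerSeriesOnBall 0 (R := 1) one_pos
  -- coefficient bounds at radius R
  have hcoeff : ∀ (n : ℕ) (R : ℝ), 1 ≤ R → ‖p.coeff n‖ ≤ K * (1 + R) ^ D * (R⁻¹) ^ n := by
    intro n R hR
    have hR0 : (0:ℝ) < R := by linarith
    have hballR : HasFPowerSeriesOnBall H (cauchyPowerSeries H 0 R) 0 ⊤ :=
      hH.hasFPowerSeriesOnBall 0 (R := ⟨R, hR0.le⟩) (by exact_mod_cast hR0)
    have hpeq : p = cauchyPowerSeries H 0 R :=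
      hball.hasFPowerSeriesAt.eq_formalMultilinearSeries hballR.hasFPowerSeriesAt
    have h1 : ‖p.coeff n‖ ≤ ‖cauchyPowerSeries H 0 R n‖ := by
      rw [hpeq]
      have := (cauchyPowerSeries H 0 R n).le_opNorm (fun _ => (1:ℂ))
      simpa using this
    have h2 := norm_cauchyPowerSeries_le H 0 R n
    have hint : ∫ θ : ℝ in (0)..2 * Real.pi, ‖H (circleMap 0 R θ)‖
        ≤ ∫ _ : ℝ in (0)..2 * Real.pi, K * (1 + R) ^ D := by
      refine intervalIntegral.integral_mono_on Real.two_pi_pos.le ?_ ?_ ?_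
      · exact ((hH.continuous.norm).comp (continuous_circleMap 0 R)).intervalIntegrable _ _
      · exact intervalIntegrable_const
      · intro θ _
        have : ‖circleMap 0 R θ‖ = R := by
          rw [norm_circleMap_zero, abs_of_pos hR0]
        calc ‖H (circleMap 0 R θ)‖ ≤ K * (1 + ‖circleMap 0 R θ‖) ^ D := hb _
          _ = K * (1 + R) ^ D := by rw [this]
    rw [intervalIntegral.integral_const, smul_eq_mul, sub_zero] at hint
    calc ‖p.coeff n‖ ≤ ‖cauchyPowerSeries H 0 R n‖ := h1
      _ ≤ ((2 * Real.pi)⁻¹ * ∫ θ : ℝ in (0)..2 * Real.pi, ‖H (circleMap 0 R θ)‖) * |R|⁻¹ ^ n :=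
        h2
      _ ≤ ((2 * Real.pi)⁻¹ * (2 * Real.pi * (K * (1 + R) ^ D))) * |R|⁻¹ ^ n := by
        refine mul_le_mul_of_nonneg_right (mul_le_mul_of_nonneg_left hint (by positivity)) ?_
        positivity
      _ = K * (1 + R) ^ D * (R⁻¹) ^ n := by
        rw [abs_of_pos hR0]
        field_simp
  -- coefficients vanish above D
  have hvanish : ∀ n, D < n → p.coeff n = 0 := by
    intro n hn
    have hK : 0 ≤ K := by
      have h1 := hb 0
      have h2 : (0:ℝ) ≤ ‖H 0‖ := norm_nonneg _
      simp only [norm_zero, add_zero, one_pow, mul_one] at h1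
      linarith
    have hzlt : ((D:ℤ) - (n:ℤ)) < 0 := by
      have : (D:ℤ) < (n:ℤ) := by exact_mod_cast hn
      omega
    have hglim : Tendsto (fun R : ℝ => K * 2 ^ D * R ^ ((D:ℤ) - (n:ℤ))) atTop (𝓝 0) :=
      tendsto_const_mul_zpow_atTop_zero hzlt
    have hlim : Tendsto (fun R : ℝ => K * (1 + R) ^ D * (R⁻¹) ^ n) atTop (𝓝 0) := by
      refine tendsto_of_tendsto_of_tendsto_of_le_of_le' tendsto_const_nhds hglim ?_ ?_
      · filter_upwards [eventually_ge_atTop 1] with R hR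
        have hR0 : (0:ℝ) < R := by linarith
        positivity
      · filter_upwards [eventually_ge_atTop 1] with R hR
        have hR0 : (0:ℝ) < R := by linarith
        have step2 : K * (2 * R) ^ D * (R⁻¹) ^ n = K * 2 ^ D * R ^ ((D:ℤ) - (n:ℤ)) := by
          rw [mul_pow]
          rw [inv_pow, ← zpow_natCast R D, ← zpow_natCast R n, ← zpow_neg,
            sub_eq_add_neg, zpow_add₀ hR0.ne']
          ring
        calc K * (1 + R) ^ D * (R⁻¹) ^ n ≤ K * (2 * R) ^ D * (R⁻¹) ^ n := by
              refine mul_le_mul_of_nonneg_right (mul_le_mul_of_nonneg_left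
                (pow_le_pow_left₀ (by linarith) (by linarith) D) hK) (by positivity)
          _ = K * 2 ^ D * R ^ ((D:ℤ) - (n:ℤ)) := step2
    have hle : ∀ᶠ R : ℝ in atTop, ‖p.coeff n‖ ≤ K * (1 + R) ^ D * (R⁻¹) ^ n := by
      filter_upwards [eventually_ge_atTop 1] with R hR
      exact hcoeff n R hR
    have := ge_of_tendsto hlim hle
    exact norm_le_zero_iff.mp this
  -- evaluate
  refine ⟨fun j => p.coeff j, fun z => ?_⟩
  have hz : z ∈ Metric.eball (0:ℂ) ⊤ := by simp
  have hsum := hball.hasSum hz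
  rw [zero_add] at hsum
  have heval : (fun n => p n fun _ => z) = fun n => p.coeff n * z ^ n := by
    funext n
    rw [FormalMultilinearSeries.apply_eq_pow_smul_coeff, smul_eq_mul]
    ring
  rw [heval] at hsum
  have hzero : ∀ n ∉ Finset.range (D + 1), p.coeff n * z ^ n = 0 := by
    intro n hn
    rw [hvanish n (by simpa using hn), zero_mul]
  exact hsum.unique (hasSum_sum_of_ne_finset_zero hzero)

lemma poly_of_bdd (h : ℂ → ℂ) (s : Finset ℂ)
    (hd : DifferentiableOn ℂ h ((s : Set ℂ))ᶜ) (K : ℝ) (D : ℕ)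
    (hb : ∀ z ∉ s, ‖h z‖ ≤ K * (1 + ‖z‖) ^ D) :
    ∃ e : ℕ → ℂ, ∀ z ∉ s, h z = ∑ j ∈ Finset.range (D + 1), e j * z ^ j := by
  obtain ⟨H, h1, h2, h3⟩ := entire_extension h s hd K D hb
  obtain ⟨e, he⟩ := entire_poly_growth H h1 K D h3
  exact ⟨e, fun z hz => by rw [← h2 z hz, he z]⟩

theorem main_assembly (μ : ℂ → ℂ → ℂ)
    (hol : DifferentiableOn ℂ (fun p : ℂ × ℂ => μ p.1 p.2)
      {p : ℂ × ℂ | p.1 ≠ p.2 ∧ p.1 ≠ 0 ∧ p.2 ≠ 0})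
    (A B Cn D : ℕ) (K : ℝ)
    (hbound : ∀ z₁ z₂ : ℂ, z₁ ≠ 0 → z₂ ≠ 0 → z₁ ≠ z₂ →
      ‖z₁ ^ A * z₂ ^ B * (z₁ - z₂) ^ Cn * μ z₁ z₂‖
        ≤ K * ((1 + ‖z₁‖) * (1 + ‖z₂‖)) ^ D) :
    ∃ (S : Finset (ℤ × ℤ × ℤ)) (c : ℤ × ℤ × ℤ → ℂ),
      ∀ z₁ z₂ : ℂ, z₁ ≠ z₂ → z₁ ≠ 0 → z₂ ≠ 0 →
        μ z₁ z₂ = ∑ t ∈ S, c t * z₁ ^ t.1 * z₂ ^ t.2.1 * (z₁ - z₂) ^ t.2.2 := by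
  classical
  set G : ℂ → ℂ → ℂ := fun z₁ z₂ => z₁ ^ A * z₂ ^ B * (z₁ - z₂) ^ Cn * μ z₁ z₂ with hG
  -- slice differentiability in the first variable
  have hGdiff1 : ∀ b : ℂ, b ≠ 0 →
      DifferentiableOn ℂ (fun z => G z b) ((({0, b} : Finset ℂ) : Set ℂ))ᶜ := by
    intro b hb
    have hμs : DifferentiableOn ℂ (fun z => μ z b) ((({0, b} : Finset ℂ) : Set ℂ))ᶜ := by
      have hcomp : (fun z => μ z b) = (fun p : ℂ × ℂ => μ p.1 p.2) ∘ (fun z => (z, b)) := rfl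
      rw [hcomp]
      refine DifferentiableOn.comp hol
        ((differentiable_id.prodMk (differentiable_const b)).differentiableOn) ?_
      intro z hz
      simp only [Set.mem_compl_iff, Finset.coe_insert, Finset.coe_singleton,
        Set.mem_insert_iff, Set.mem_singleton_iff] at hz
      push_neg at hz
      exact ⟨hz.2, hz.1, hb⟩
    have d1 : Differentiable ℂ (fun z : ℂ => z ^ A * b ^ B * (z - b) ^ Cn) :=
      ((differentiable_pow A).mul_const _).mul ((differentiable_id.sub_const b).pow Cn)
    exact (d1.differentiableOn).mul hμs
  -- slice differentiability in the second variable
  have hGdiff2 : ∀ a : ℂ, a ≠ 0 →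
      DifferentiableOn ℂ (fun y => G a y) ((({0, a} : Finset ℂ) : Set ℂ))ᶜ := by
    intro a ha
    have hμs : DifferentiableOn ℂ (fun y => μ a y) ((({0, a} : Finset ℂ) : Set ℂ))ᶜ := by
      have hcomp : (fun y => μ a y) = (fun p : ℂ × ℂ => μ p.1 p.2) ∘ (fun y => (a, y)) := rfl
      rw [hcomp]
      refine DifferentiableOn.comp hol
        (((differentiable_const a).prodMk differentiable_id).differentiableOn) ?_
      intro y hy
      simp only [Set.mem_compl_iff, Finset.coe_insert, Finset.coe_singleton,
        Set.mem_insert_iff, Set.mem_singleton_iff] at hy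
      push_neg at hy
      exact ⟨fun h => hy.2 h.symm, ha, hy.1⟩
    have d1 : Differentiable ℂ (fun y : ℂ => a ^ A * y ^ B * (a - y) ^ Cn) :=
      ((differentiable_pow B).const_mul _).mul
        (((differentiable_const a).sub differentiable_id).pow Cn)
    exact (d1.differentiableOn).mul hμs
  -- slice bounds
  have hGb1 : ∀ b : ℂ, b ≠ 0 → ∀ z : ℂ, z ∉ ({0, b} : Finset ℂ) →
      ‖G z b‖ ≤ (K * (1 + ‖b‖) ^ D) * (1 + ‖z‖) ^ D := by
    intro b hb z hz
    simp only [Finset.mem_insert, Finset.mem_singleton] at hz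
    push_neg at hz
    have := hbound z b hz.1 hb hz.2
    calc ‖G z b‖ ≤ K * ((1 + ‖z‖) * (1 + ‖b‖)) ^ D := this
      _ = (K * (1 + ‖b‖) ^ D) * (1 + ‖z‖) ^ D := by rw [mul_pow]; ring
  have hGb2 : ∀ a : ℂ, a ≠ 0 → ∀ y : ℂ, y ∉ ({0, a} : Finset ℂ) →
      ‖G a y‖ ≤ (K * (1 + ‖a‖) ^ D) * (1 + ‖y‖) ^ D := by
    intro a ha y hy
    simp only [Finset.mem_insert, Finset.mem_singleton] at hy
    push_neg at hy
    have := hbound a y ha hy.1 (fun h => hy.2 h.symm)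
    calc ‖G a y‖ ≤ K * ((1 + ‖a‖) * (1 + ‖y‖)) ^ D := this
      _ = (K * (1 + ‖a‖) ^ D) * (1 + ‖y‖) ^ D := by rw [mul_pow]; ring
  -- interpolation nodes
  set w : Fin (D + 1) → ℂ := fun m => ((m : ℕ) : ℂ) + 1 with hw
  have hwne : ∀ m, w m ≠ 0 := by
    intro m h
    simp only [hw] at h
    have h2 : (((m : ℕ) + 1 : ℕ) : ℂ) = 0 := by push_cast; linear_combination h
    exact Nat.cast_ne_zero.mpr (Nat.succ_ne_zero _) h2
  have hwinj : Function.Injective w := by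
    intro m m' h
    simp only [hw] at h
    have : ((m : ℕ) : ℂ) = ((m' : ℕ) : ℂ) := by linear_combination h
    exact Fin.ext (by exact_mod_cast this)
  -- rows: expansion of G (w m) · in the second variable
  have hrow : ∀ m : Fin (D + 1), ∃ e : ℕ → ℂ, ∀ y ∉ ({0, w m} : Finset ℂ),
      G (w m) y = ∑ l ∈ Finset.range (D + 1), e l * y ^ l := by
    intro m
    exact poly_of_bdd _ _ (hGdiff2 (w m) (hwne m)) _ D (hGb2 (w m) (hwne m))
  choose d hd using hrow
  -- Vandermonde matrix
  set V : Matrix (Fin (D + 1)) (Fin (D + 1)) ℂ := Matrix.vandermonde w with hV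
  have hdet : IsUnit V.det := by
    rw [hV, Matrix.det_vandermonde]
    refine (Finset.prod_ne_zero_iff.mpr fun i _ => Finset.prod_ne_zero_iff.mpr
      fun j hj => ?_).isUnit
    have hij : i ≠ j := by
      intro h; subst h; simp at hj
    exact sub_ne_zero.mpr fun h => hij (hwinj h.symm)
  set E : Fin (D + 1) → Fin (D + 1) → ℂ :=
    fun j l => ∑ m : Fin (D + 1), V⁻¹ j m * d m l.val with hE
  set P : ℂ → ℂ → ℂ := fun z₁ z₂ => ∑ p : Fin (D + 1) × Fin (D + 1),
    E p.1 p.2 * z₁ ^ (p.1 : ℕ) * z₂ ^ (p.2 : ℕ) with hP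
  -- the bad set of second coordinates
  set bad : Set ℂ := Set.range w with hbad
  have hbadfin : bad.Finite := Set.finite_range w
  -- key identity away from bad
  have hkey : ∀ b : ℂ, b ≠ 0 → b ∉ bad → ∀ z : ℂ, z ≠ 0 → z ≠ b →
      G z b = P z b := by
    intro b hb hbbad z hz hzb
    obtain ⟨e, he⟩ := poly_of_bdd _ _ (hGdiff1 b hb) _ D (hGb1 b hb)
    set cvec : Fin (D + 1) → ℂ := fun j => e j.val with hcvec
    have hVc : V.mulVec cvec = fun m => G (w m) b := by
      funext m
      have hwm : w m ∉ ({0, b} : Finset ℂ) := by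
        simp only [Finset.mem_insert, Finset.mem_singleton]
        push_neg
        exact ⟨hwne m, fun h => hbbad ⟨m, h⟩⟩
      rw [he (w m) hwm]
      rw [Matrix.mulVec, dotProduct]
      rw [← Fin.sum_univ_eq_sum_range (fun l => e l * w m ^ l) (D + 1)]
      refine Finset.sum_congr rfl fun j _ => ?_
      rw [hV, Matrix.vandermonde]
      simp only [Matrix.of_apply]
      ring
    have hcvec_eq : cvec = V⁻¹.mulVec (fun m => G (w m) b) := by
      rw [← hVc, Matrix.mulVec_mulVec, Matrix.nonsing_inv_mul V hdet, Matrix.one_mulVec]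
    have hGzb : G z b = ∑ j ∈ Finset.range (D + 1), e j * z ^ j := by
      refine he z ?_
      simp only [Finset.mem_insert, Finset.mem_singleton]
      push_neg
      exact ⟨hz, hzb⟩
    rw [hGzb, hP]
    rw [← Fin.sum_univ_eq_sum_range (fun j => e j * z ^ j) (D + 1)]
    have hcv : ∀ j : Fin (D + 1), e j.val = ∑ m : Fin (D + 1), V⁻¹ j m * G (w m) b := by
      intro j
      have := congrFun hcvec_eq j
      rw [hcvec] at this
      simpa [Matrix.mulVec, dotProduct] using this
    have hGwm : ∀ m : Fin (D + 1), G (w m) b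
        = ∑ l : Fin (D + 1), d m l.val * b ^ (l : ℕ) := by
      intro m
      have hbm : b ∉ ({0, w m} : Finset ℂ) := by
        simp only [Finset.mem_insert, Finset.mem_singleton]
        push_neg
        exact ⟨hb, fun h => hbbad ⟨m, h.symm⟩⟩
      rw [hd m b hbm, ← Fin.sum_univ_eq_sum_range (fun l => d m l * b ^ l) (D + 1)]
    calc ∑ j : Fin (D + 1), e j.val * z ^ (j : ℕ)
        = ∑ j : Fin (D + 1), (∑ m : Fin (D + 1), V⁻¹ j m *
            (∑ l : Fin (D + 1), d m l.val * b ^ (l : ℕ))) * z ^ (j : ℕ) := by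
          refine Finset.sum_congr rfl fun j _ => ?_
          rw [hcv j]
          congr 1
          refine Finset.sum_congr rfl fun m _ => ?_
          rw [hGwm m]
      _ = ∑ p : Fin (D + 1) × Fin (D + 1), E p.1 p.2 * z ^ (p.1 : ℕ) * b ^ (p.2 : ℕ) := by
          rw [Fintype.sum_prod_type]
          refine Finset.sum_congr rfl fun j _ => ?_
          calc (∑ m, V⁻¹ j m * ∑ l : Fin (D + 1), d m l.val * b ^ (l : ℕ)) * z ^ (j : ℕ)
              = ∑ m, ∑ l : Fin (D + 1), V⁻¹ j m * d m l.val * z ^ (j : ℕ) * b ^ (l : ℕ) := by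
                rw [Finset.sum_mul]
                refine Finset.sum_congr rfl fun m _ => ?_
                rw [Finset.mul_sum, Finset.sum_mul]
                refine Finset.sum_congr rfl fun l _ => by ring
            _ = ∑ l : Fin (D + 1), E j l * z ^ (j : ℕ) * b ^ (l : ℕ) := by
                rw [Finset.sum_comm]
                refine Finset.sum_congr rfl fun l _ => ?_
                simp only [hE, Finset.sum_mul]
                try refine Finset.sum_congr rfl fun m _ => by ring
  -- extend the identity to all of Y₂ by continuity/density in the second variable
  have hmain : ∀ z b : ℂ, z ≠ 0 → b ≠ 0 → z ≠ b → G z b = P z b := by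
    intro z b hz hb hzb
    set U : Set ℂ := ((({0, z} : Finset ℂ) : Set ℂ))ᶜ with hU
    have hUopen : IsOpen U := (Finset.finite_toSet _).isClosed.isOpen_compl
    have hbU : b ∈ U := by
      simp only [hU, Set.mem_compl_iff, Finset.coe_insert, Finset.coe_singleton,
        Set.mem_insert_iff, Set.mem_singleton_iff]
      push_neg
      exact ⟨hb, fun h => hzb h.symm⟩
    set T : Set ℂ := (bad ∪ {b})ᶜ ∩ U with hT
    have hTU : T ⊆ U := Set.inter_subset_right
    have hneb : (𝓝[T] b).NeBot := by
      have h1 : (𝓝[(bad ∪ {b})ᶜ] b).NeBot := by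
        have h2 := neBot_nhdsWithin_compl_finite hbadfin b
        have hset : badᶜ \ {b} = (bad ∪ {b})ᶜ := by
          rw [Set.compl_union, Set.diff_eq]
        rwa [hset] at h2
      rw [hT, ← nhdsWithin_restrict' _ (hUopen.mem_nhds hbU)]
      exact h1
    have ht1 : Tendsto (fun y => G z y) (𝓝[T] b) (𝓝 (G z b)) := by
      have hcont : ContinuousWithinAt (fun y => G z y) U b :=
        ((hGdiff2 z hz).continuousOn) b hbU
      exact (hcont.mono hTU).tendsto
    have hPcont : Continuous (fun y => P z y) := by
      rw [hP]
      exact continuous_finset_sum _ fun p _ =>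
        (continuous_const.mul (continuous_pow _))
    have ht2 : Tendsto (fun y => P z y) (𝓝[T] b) (𝓝 (P z b)) :=
      (hPcont.tendsto b).mono_left nhdsWithin_le_nhds
    have hev : ∀ y ∈ T, G z y = P z y := by
      intro y hy
      obtain ⟨hyc, hyU⟩ := hy
      simp only [Set.mem_compl_iff, Set.mem_union, Set.mem_singleton_iff] at hyc
      push_neg at hyc
      simp only [hU, Set.mem_compl_iff, Finset.coe_insert, Finset.coe_singleton,
        Set.mem_insert_iff, Set.mem_singleton_iff] at hyU
      push_neg at hyU
      exact hkey y hyU.1 hyc.1 z hz (fun h => hyU.2 h.symm)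
    refine tendsto_nhds_unique ht1 (ht2.congr' ?_)
    filter_upwards [self_mem_nhdsWithin] with y hy
    exact (hev y hy).symm
  -- final Laurent polynomial data
  set emb : Fin (D + 1) × Fin (D + 1) → ℤ × ℤ × ℤ :=
    fun p => (((p.1 : ℕ) : ℤ) - A, (((p.2 : ℕ) : ℤ) - B, -(Cn : ℤ))) with hemb
  have hembinj : Function.Injective emb := by
    intro p p' h
    simp only [hemb, Prod.mk.injEq] at h
    obtain ⟨h1, h2, -⟩ := h
    have e1 : ((p.1 : ℕ) : ℤ) = ((p'.1 : ℕ) : ℤ) := by omega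
    have e2 : ((p.2 : ℕ) : ℤ) = ((p'.2 : ℕ) : ℤ) := by omega
    exact Prod.ext (Fin.ext (by exact_mod_cast e1)) (Fin.ext (by exact_mod_cast e2))
  set c : ℤ × ℤ × ℤ → ℂ := fun t =>
    if hj : (t.1 + A).toNat < D + 1 then
      if hl : (t.2.1 + B).toNat < D + 1 then
        E ⟨(t.1 + A).toNat, hj⟩ ⟨(t.2.1 + B).toNat, hl⟩
      else 0
    else 0 with hc
  have hcemb : ∀ p : Fin (D + 1) × Fin (D + 1), c (emb p) = E p.1 p.2 := by
    intro p
    have e1 : ((((p.1 : ℕ) : ℤ) - A) + A).toNat = (p.1 : ℕ) := by omega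
    have e2 : ((((p.2 : ℕ) : ℤ) - B) + B).toNat = (p.2 : ℕ) := by omega
    simp only [hc, hemb, e1, e2, dif_pos p.1.isLt, dif_pos p.2.isLt]
  refine ⟨Finset.image emb Finset.univ, c, ?_⟩
  intro z₁ z₂ hne hz₁ hz₂
  have hsub : z₁ - z₂ ≠ 0 := sub_ne_zero.mpr hne
  have hnz : z₁ ^ A * z₂ ^ B * (z₁ - z₂) ^ Cn ≠ 0 := by
    exact mul_ne_zero (mul_ne_zero (pow_ne_zero _ hz₁) (pow_ne_zero _ hz₂))
      (pow_ne_zero _ hsub)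
  refine mul_left_cancel₀ hnz ?_
  have hSsum : ∑ t ∈ Finset.image emb Finset.univ,
      c t * z₁ ^ t.1 * z₂ ^ t.2.1 * (z₁ - z₂) ^ t.2.2
      = ∑ p : Fin (D + 1) × Fin (D + 1),
        c (emb p) * z₁ ^ (emb p).1 * z₂ ^ (emb p).2.1 * (z₁ - z₂) ^ (emb p).2.2 :=
    Finset.sum_image (fun p _ q _ h => hembinj h)
  rw [hSsum]
  have hLHS : z₁ ^ A * z₂ ^ B * (z₁ - z₂) ^ Cn * μ z₁ z₂ = P z₁ z₂ :=
    hmain z₁ z₂ hz₁ hz₂ hne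
  rw [hLHS, hP, Finset.mul_sum]
  refine Finset.sum_congr rfl fun p _ => ?_
  rw [hcemb p]
  simp only [hemb]
  have h1 : (z₁:ℂ) ^ (A:ℕ) * z₁ ^ (((p.1 : ℕ) : ℤ) - A) = z₁ ^ ((p.1 : ℕ)) := by
    rw [← zpow_natCast z₁ A, ← zpow_add₀ hz₁, ← zpow_natCast z₁ ((p.1 : ℕ))]
    congr 1
    ring
  have h2 : (z₂:ℂ) ^ (B:ℕ) * z₂ ^ (((p.2 : ℕ) : ℤ) - B) = z₂ ^ ((p.2 : ℕ)) := by
    rw [← zpow_natCast z₂ B, ← zpow_add₀ hz₂, ← zpow_natCast z₂ ((p.2 : ℕ))]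
    congr 1
    ring
  have h3 : (z₁ - z₂) ^ (Cn:ℕ) * (z₁ - z₂) ^ (-(Cn : ℤ)) = 1 := by
    rw [← zpow_natCast (z₁ - z₂) Cn, ← zpow_add₀ hsub]
    simp
  symm
  calc z₁ ^ A * z₂ ^ B * (z₁ - z₂) ^ Cn *
        (E p.1 p.2 * z₁ ^ (((p.1 : ℕ) : ℤ) - A) * z₂ ^ (((p.2 : ℕ) : ℤ) - B) *
          (z₁ - z₂) ^ (-(Cn : ℤ)))
      = (z₁ ^ A * z₁ ^ (((p.1 : ℕ) : ℤ) - A)) * (z₂ ^ B * z₂ ^ (((p.2 : ℕ) : ℤ) - B)) *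
        ((z₁ - z₂) ^ Cn * (z₁ - z₂) ^ (-(Cn : ℤ))) * E p.1 p.2 := by ring
    _ = z₁ ^ ((p.1 : ℕ)) * z₂ ^ ((p.2 : ℕ)) * 1 * E p.1 p.2 := by rw [h1, h2, h3]
    _ = E p.1 p.2 * z₁ ^ ((p.1 : ℕ)) * z₂ ^ ((p.2 : ℕ)) := by ring


end AuxHolGCor2

/-- If `μ ∈ GCor₂` satisfies `∂μ/∂z̄₁ = ∂μ/∂z̄₂ = 0` (i.e. `μ` is
holomorphic on `Y₂`), then `μ ∈ ℂ[z₁^±, z₂^±, (z₁-z₂)^±]`. -/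
theorem holomorphic_GCor2_is_laurent (μ : ℂ → ℂ → ℂ) (hμ : MemGCor2 μ)
    (hol : DifferentiableOn ℂ (fun p : ℂ × ℂ => μ p.1 p.2)
      {p : ℂ × ℂ | p.1 ≠ p.2 ∧ p.1 ≠ 0 ∧ p.2 ≠ 0}) :
    ∃ (S : Finset (ℤ × ℤ × ℤ)) (c : ℤ × ℤ × ℤ → ℂ),
      ∀ z₁ z₂ : ℂ, z₁ ≠ z₂ → z₁ ≠ 0 → z₂ ≠ 0 →
        μ z₁ z₂ = ∑ t ∈ S, c t * z₁ ^ t.1 * z₂ ^ t.2.1 * (z₁ - z₂) ^ t.2.2 := by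
  obtain ⟨A, B, Cn, D, K, -, hbound⟩ := growth_mu μ hμ
  exact main_assembly μ hol A B Cn D K hbound
end
end

section
/- A unital commutative associative algebra object in the braided monoidal category of H-graded complex vector spaces with braiding B(v_α ⊗ w_β) = e^{π i (α,β)} w_β ⊗ v_α is the same thing as an AH pair: a unital associative H-graded algebra A = ⊕_{α∈H} A^α with 1 ∈ A^0, A^α A^β ⊆ A^{α+β}, such that A^α A^β ≠ 0 implies (α,β) ∈ ℤ, and vw = (−1)^{(α,β)} wv for v ∈ A^α, w ∈ A^β. -/
noncomputable section

lemma exp_pi_I_int (m : ℤ) :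
    Complex.exp ((Real.pi : ℂ) * Complex.I * (m : ℂ)) = (-1 : ℂ) ^ m := by
  rw [mul_comm, Complex.exp_int_mul, Complex.exp_pi_mul_I]

/-- Let `H` be a finite-dimensional real vector space with a
non-degenerate symmetric bilinear form `B`, and let `A` be a unital associative
`H`-graded `ℂ`-algebra (`1 ∈ A⁰`, `A^α A^β ⊆ A^{α+β}`).  Then `A` is a *commutative*
algebra object in the braided monoidal category of `H`-graded vector spaces with
braiding `B(v_α ⊗ w_β) = e^{πi(α,β)} w_β ⊗ v_α` — i.e. `v·w = e^{πi(α,β)} (w·v)` for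
homogeneous `v, w` — if and only if `A` is an AH pair: `A^α A^β ≠ 0` implies
`(α,β) ∈ ℤ`, and `v·w = (-1)^{(α,β)} (w·v)` for homogeneous `v, w`. -/
theorem commutative_algebra_object_iff_AH_pair
    (H : Type) [AddCommGroup H] [Module ℝ H] [FiniteDimensional ℝ H] [DecidableEq H]
    (B : H →ₗ[ℝ] H →ₗ[ℝ] ℝ)
    (hsymm : ∀ α β : H, B α β = B β α)
    (hnondeg : ∀ α : H, (∀ β : H, B α β = 0) → α = 0)
    (A : Type) [Ring A] [Algebra ℂ A]
    (grade : H → Submodule ℂ A)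
    (hinternal : DirectSum.IsInternal grade)
    (hone : (1 : A) ∈ grade 0)
    (hmul : ∀ (α β : H), ∀ v ∈ grade α, ∀ w ∈ grade β, v * w ∈ grade (α + β)) :
    (∀ (α β : H) (v w : A), v ∈ grade α → w ∈ grade β →
      v * w = Complex.exp ((Real.pi : ℂ) * Complex.I * ((B α β : ℝ) : ℂ)) • (w * v))
    ↔
    ((∀ (α β : H) (v w : A), v ∈ grade α → w ∈ grade β → v * w ≠ 0 →
        ∃ m : ℤ, B α β = (m : ℝ)) ∧
     (∀ (α β : H) (m : ℤ), B α β = (m : ℝ) →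
        ∀ (v w : A), v ∈ grade α → w ∈ grade β →
          v * w = ((-1 : ℂ) ^ m) • (w * v))) := by
  constructor
  · intro hcomm
    constructor
    · intro α β v w hv hw hne
      have h1 := hcomm α β v w hv hw
      have h2 := hcomm β α w v hw hv
      rw [hsymm β α] at h2
      set c := Complex.exp ((Real.pi : ℂ) * Complex.I * ((B α β : ℝ) : ℂ)) with hc
      have key : (c * c - 1) • (v * w) = 0 := by
        rw [sub_smul, one_smul, mul_smul, ← h2, ← h1, sub_self]
      rcases smul_eq_zero.mp key with h | h
      · have hcc : c * c = 1 := by linear_combination h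
        have : Complex.exp ((Real.pi : ℂ) * Complex.I * ((B α β : ℝ) : ℂ)
            + (Real.pi : ℂ) * Complex.I * ((B α β : ℝ) : ℂ)) = 1 := by
          rw [Complex.exp_add]; exact hcc
        rcases Complex.exp_eq_one_iff.mp this with ⟨n, hn⟩
        refine ⟨n, ?_⟩
        have hπ : (Real.pi : ℂ) ≠ 0 := by
          exact_mod_cast Real.pi_ne_zero
        have h2πI : (2 * (Real.pi : ℂ) * Complex.I) ≠ 0 := by
          simp [hπ, Complex.I_ne_zero]
        have : ((B α β : ℝ) : ℂ) = (n : ℂ) := by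
          apply mul_left_cancel₀ h2πI
          linear_combination hn
        exact_mod_cast this
      · exact absurd h hne
    · intro α β m hm v w hv hw
      have h1 := hcomm α β v w hv hw
      rw [hm] at h1
      rwa [Complex.ofReal_intCast, exp_pi_I_int] at h1
  · rintro ⟨hint, hsign⟩ α β v w hv hw
    by_cases hvw : v * w = 0
    · rw [hvw]
      by_cases hwv : w * v = 0
      · rw [hwv, smul_zero]
      · rcases hint β α w v hw hv hwv with ⟨m, hm⟩
        have hm' : B α β = (m : ℝ) := by rw [hsymm]; exact hm
        have := hsign β α m hm w v hw hv
        rw [hvw, smul_zero] at this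
        exact absurd this hwv
    · rcases hint α β v w hv hw hvw with ⟨m, hm⟩
      rw [hm, Complex.ofReal_intCast, exp_pi_I_int]
      exact hsign α β m hm v w hv hw
end
end
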